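/- arXiv:1407.7474 — 2 statements merged into one kernel-verified Lean document; each statement's English description precedes it below -/
import Mathlib

section
/- Let G be a countable nonamenable group which is inner amenable. Then every nonamenable subgroup of G is wq-normal in G. -/
open Pointwise

/-- A mean on `X`: a finitely additive probability measure defined on all subsets of `X`. -/
structure Mean (X : Type*) where
  m : Set X → ℝ
  nonneg : ∀ A : Set X, 0 ≤ m A
  total : m Set.univ = 1
  fin_add : ∀ A B : Set X, Disjoint A B → m (A ∪ B) = m A + m B

/-- A mean on a `G`-set `X` is invariant if it is preserved by the action of every `g ∈ G`. -/
def MeanInvariant (G : Type*) [Group G] {X : Type*} [MulAction G X] (m : Mean X) : Prop :=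
  ∀ (g : G) (A : Set X), m.m ((fun x => g • x) '' A) = m.m A

/-- The action of `G` on `X` is amenable: there is a `G`-invariant mean on `X`. -/
def AmenableAction (G : Type*) [Group G] (X : Type*) [MulAction G X] : Prop :=
  ∃ m : Mean X, MeanInvariant G m

/-- A group is amenable if its left translation action on itself admits an invariant mean. -/
def AmenableGroup (G : Type*) [Group G] : Prop :=
  ∃ m : Mean G, ∀ (g : G) (A : Set G), m.m ((fun x => g * x) '' A) = m.m A

/-- `H` is `L`-q-normal in `M` if `{g ∈ M : gHg⁻¹ ∩ H ∈ L}` generates `M`. -/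
def IsLQNormal {G : Type*} [Group G] (L : Subgroup G → Prop) (H M : Subgroup G) : Prop :=
  H ≤ M ∧
    Subgroup.closure
      {g : G | g ∈ M ∧ L (Subgroup.map (MulAut.conj g).toMonoidHom H ⊓ H)} = M

/-- `H` is `L`-wq-normal in `M`: there is an increasing ordinal-indexed chain from `H` to `M`
whose unions of initial segments are `L`-q-normal at every stage. -/
def IsLWQNormal {G : Type*} [Group G] (L : Subgroup G → Prop) (H M : Subgroup G) : Prop :=
  ∃ (lam : Ordinal.{0}) (c : Ordinal.{0} → Subgroup G),
    (∀ α β : Ordinal.{0}, α ≤ β → β ≤ lam → c α ≤ c β) ∧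
    c 0 = H ∧ c lam = M ∧
    ∀ α : Ordinal.{0}, 0 < α → α ≤ lam →
      IsLQNormal L (⨆ (β : Ordinal.{0}) (_ : β < α), c β) (c α)

/-- q*-normality: `{g ∈ M : gHg⁻¹ ∩ H nonamenable}` generates `M`. -/
def IsQStarNormal {G : Type*} [Group G] (H M : Subgroup G) : Prop :=
  IsLQNormal (fun K => ¬ AmenableGroup ↥K) H M

/-- wq*-normality. -/
def IsWQStarNormal {G : Type*} [Group G] (H M : Subgroup G) : Prop :=
  IsLWQNormal (fun K => ¬ AmenableGroup ↥K) H M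

/-- q-normality: `{g ∈ M : gHg⁻¹ ∩ H infinite}` generates `M`. -/
def IsQNormal {G : Type*} [Group G] (H M : Subgroup G) : Prop :=
  IsLQNormal (fun K => ((K : Set G)).Infinite) H M

/-- wq-normality. -/
def IsWQNormal {G : Type*} [Group G] (H M : Subgroup G) : Prop :=
  IsLWQNormal (fun K => ((K : Set G)).Infinite) H M

/-- `n`-degree `L`-wq-normality in `G`: `L₀ = L`, `L_{n+1} = {H : H is Lₙ-wq-normal in G}`. -/
def NDegLWQNormal {G : Type*} [Group G] (L : Subgroup G → Prop) : ℕ → Subgroup G → Prop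
  | 0, H => L H
  | n + 1, H => IsLWQNormal (NDegLWQNormal L n) H ⊤

/-- The isoperimetric constant `φ_S(X)` of a `G`-set `X` with respect to a finite `S ⊆ G`. -/
noncomputable def phiConst {G : Type*} [Group G] (S : Finset G) (X : Type*) [MulAction G X] :
    ℝ :=
  sInf {r : ℝ | ∃ P : Finset X, P.Nonempty ∧
    r = (∑ s ∈ S, (((s • (P : Set X)) \ (P : Set X)).ncard : ℝ)) / (P.card : ℝ)}


/-- `G` is inner amenable: there is an atomless mean on `G` invariant under conjugation. -/
def InnerAmenable (G : Type*) [Group G] : Prop :=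
  ∃ m : Mean G, (∀ g : G, m.m {g} = 0) ∧
    ∀ (g : G) (A : Set G), m.m ((fun x => g * x * g⁻¹) '' A) = m.m A

namespace MeanAux

variable {X : Type*} (m : Mean X)

theorem mean_empty : m.m ∅ = 0 := by
  have := m.fin_add ∅ ∅ (disjoint_bot_left)
  simp at this; linarith

theorem mean_diff {A B : Set X} (h : A ⊆ B) : m.m B = m.m A + m.m (B \ A) := by
  have := m.fin_add A (B \ A) disjoint_sdiff_self_right
  rwa [Set.union_diff_cancel h] at this

theorem mean_mono {A B : Set X} (h : A ⊆ B) : m.m A ≤ m.m B := by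
  have := mean_diff m h; have := m.nonneg (B \ A); linarith

theorem mean_le_one (A : Set X) : m.m A ≤ 1 := by
  have := mean_mono m (Set.subset_univ A); rwa [m.total] at this

theorem mean_compl (A : Set X) : m.m Aᶜ = 1 - m.m A := by
  have := m.fin_add A Aᶜ disjoint_compl_right
  rw [Set.union_compl_self, m.total] at this; linarith

theorem mean_null_subset {A N : Set X} (h : A ⊆ N) (hN : m.m N = 0) : m.m A = 0 :=
  le_antisymm (hN ▸ mean_mono m h) (m.nonneg A)

theorem mean_inter_ge (A B : Set X) : m.m A + m.m B - 1 ≤ m.m (A ∩ B) := by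
  have h1 : m.m B = m.m (A ∩ B) + m.m (B \ A) := by
    rw [← m.fin_add _ _ (Disjoint.mono_left Set.inter_subset_left disjoint_sdiff_self_right)]
    congr 1; ext x; by_cases hx : x ∈ A <;> simp [hx]
  have h2 : m.m (A ∪ B) = m.m A + m.m (B \ A) := by
    rw [← m.fin_add _ _ disjoint_sdiff_self_right, Set.union_diff_self]
  have := mean_le_one m (A ∪ B)
  linarith

theorem mean_finset_zero (hat : ∀ x : X, m.m {x} = 0) (s : Finset X) :
    m.m ↑s = 0 := by
  classical
  induction s using Finset.induction with
  | empty => simpa using mean_empty m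
  | insert a s hx ih =>
    rw [Finset.coe_insert, Set.insert_eq, m.fin_add _ _ (by simpa using hx), hat, ih]
    norm_num

theorem mean_finite_zero (hat : ∀ x : X, m.m {x} = 0) {A : Set X} (hA : A.Finite) :
    m.m A = 0 := by
  have := mean_finset_zero m hat hA.toFinset
  rwa [Set.Finite.coe_toFinset] at this

theorem mean_nonempty (m : Mean X) : Nonempty X := by
  by_contra h
  have huniv : (Set.univ : Set X) = ∅ := by
    ext x; exact absurd ⟨x⟩ h
  have := m.total
  rw [huniv, mean_empty m] at this; linarith

/-- additivity over finite partitions -/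
theorem mean_sum_partition {ι : Type*} (s : Finset ι) (P : ι → Set X)
    (hd : ∀ i ∈ s, ∀ j ∈ s, i ≠ j → Disjoint (P i) (P j)) (A : Set X)
    (hA : A ⊆ ⋃ i ∈ s, P i) : m.m A = ∑ i ∈ s, m.m (A ∩ P i) := by
  classical
  induction s using Finset.induction generalizing A with
  | empty =>
    rw [show A = ∅ by simpa using hA]
    simp [mean_empty m]
  | insert a s hx ih =>
    have key : m.m A = m.m (A ∩ P a) + m.m (A \ P a) := by
      have := m.fin_add (A ∩ P a) (A \ P a)
        (Disjoint.mono_left Set.inter_subset_right disjoint_sdiff_self_right)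
      rwa [Set.inter_union_diff] at this
    rw [Finset.sum_insert hx, key]
    congr 1
    have h1 : A \ P a ⊆ ⋃ i ∈ s, P i := by
      intro x hx'
      have := hA hx'.1
      simp only [Set.mem_iUnion] at this ⊢
      obtain ⟨i, hi, hxi⟩ := this
      rcases Finset.mem_insert.mp hi with rfl | hi'
      · exact absurd hxi hx'.2
      · exact ⟨i, hi', hxi⟩
    rw [ih (fun i hi j hj hij => hd i (Finset.mem_insert_of_mem hi) j
      (Finset.mem_insert_of_mem hj) hij) _ h1]
    apply Finset.sum_congr rfl
    intro i hi
    congr 1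
    ext x
    constructor
    · rintro ⟨⟨hxA, hxPa⟩, hxPi⟩; exact ⟨hxA, hxPi⟩
    · rintro ⟨hxA, hxPi⟩
      refine ⟨⟨hxA, ?_⟩, hxPi⟩
      intro hxPa
      exact (hd a (Finset.mem_insert_self a s) i (Finset.mem_insert_of_mem hi)
        (fun h => hx (h ▸ hi))).le_bot ⟨hxPa, hxPi⟩

end MeanAux
namespace MeanAux

variable {X : Type*} (m : Mean X)

open scoped Classical in
/-- Integral of a finite-range function against a mean. -/
noncomputable def J (f : X → ℝ) : ℝ :=
  if h : (Set.range f).Finite then ∑ c ∈ h.toFinset, c * m.m (f ⁻¹' {c}) else 0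

theorem J_eq_sum {f : X → ℝ} (hf : (Set.range f).Finite) (s : Finset ℝ)
    (hs : Set.range f ⊆ ↑s) : J m f = ∑ c ∈ s, c * m.m (f ⁻¹' {c}) := by
  rw [J]
  rw [dif_pos hf]
  apply Finset.sum_subset
  · intro c hc
    exact hs (hf.mem_toFinset.mp hc)
  · intro c _ hc
    have : f ⁻¹' {c} = ∅ := by
      ext x; simp only [Set.mem_preimage, Set.mem_singleton_iff, Set.mem_empty_iff_false,
        iff_false]
      intro h; exact hc (hf.mem_toFinset.mpr ⟨x, h⟩)
    rw [this, mean_empty m, mul_zero]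

/-- decomposing the measure of a set along fibers of a finite-range function -/
theorem mean_fiber_sum {g : X → ℝ} (s : Finset ℝ) (hs : Set.range g ⊆ ↑s) (A : Set X) :
    m.m A = ∑ c ∈ s, m.m (A ∩ g ⁻¹' {c}) := by
  apply mean_sum_partition m s (fun c => g ⁻¹' {c})
  · intro i _ j _ hij
    rw [Set.disjoint_iff]
    rintro x ⟨hxi, hxj⟩
    simp only [Set.mem_preimage, Set.mem_singleton_iff] at hxi hxj
    exact absurd (hxi ▸ hxj) hij
  · intro x _
    simp only [Set.mem_iUnion]
    exact ⟨g x, by exact_mod_cast hs ⟨x, rfl⟩, rfl⟩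

/-- The key double-sum formula. -/
theorem J_comp₂ (φ : ℝ → ℝ → ℝ) {f g : X → ℝ} (hf : (Set.range f).Finite)
    (hg : (Set.range g).Finite) :
    J m (fun x => φ (f x) (g x)) =
      ∑ p ∈ hf.toFinset ×ˢ hg.toFinset, φ p.1 p.2 * m.m (f ⁻¹' {p.1} ∩ g ⁻¹' {p.2}) := by
  classical
  set s := hf.toFinset
  set t := hg.toFinset
  have hrange : Set.range (fun x => φ (f x) (g x)) ⊆ ↑(Finset.image (fun p => φ p.1 p.2) (s ×ˢ t)) := by
    rintro y ⟨x, rfl⟩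
    simp only [Finset.coe_image, Set.mem_image]
    exact ⟨(f x, g x), by simp [s, t, Finset.mem_product, hf.mem_toFinset, hg.mem_toFinset,
      Set.mem_range_self], rfl⟩
  rw [J_eq_sum m (Set.Finite.subset (Finset.image (fun p => φ p.1 p.2) (s ×ˢ t)).finite_toSet hrange)
    _ hrange]
  -- expand each fiber measure along (f,g)-fibers
  have fibeq : ∀ e : ℝ, m.m ((fun x => φ (f x) (g x)) ⁻¹' {e}) =
      ∑ p ∈ s ×ˢ t, m.m ((fun x => φ (f x) (g x)) ⁻¹' {e} ∩ (f ⁻¹' {p.1} ∩ g ⁻¹' {p.2})) := by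
    intro e
    apply mean_sum_partition m (s ×ˢ t) (fun p => f ⁻¹' {p.1} ∩ g ⁻¹' {p.2})
    · rintro ⟨i1, i2⟩ _ ⟨j1, j2⟩ _ hij
      rw [Set.disjoint_iff]
      rintro x ⟨⟨h1, h2⟩, h3, h4⟩
      simp only [Set.mem_preimage, Set.mem_singleton_iff] at h1 h2 h3 h4
      exact hij (by rw [← h1, ← h2, ← h3, ← h4])
    · intro x _
      simp only [Set.mem_iUnion]
      exact ⟨(f x, g x), by simp [s, t, Finset.mem_product, hf.mem_toFinset, hg.mem_toFinset,
        Set.mem_range_self], by simp⟩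
  set E := Finset.image (fun p => φ p.1 p.2) (s ×ˢ t) with hE
  set u := fun x => φ (f x) (g x)
  have key1 : ∀ p : ℝ × ℝ, p ∈ s ×ˢ t → ∀ e : ℝ, e ≠ φ p.1 p.2 →
      u ⁻¹' {e} ∩ (f ⁻¹' {p.1} ∩ g ⁻¹' {p.2}) = ∅ := by
    rintro ⟨c, d⟩ _ e he
    ext x
    simp only [Set.mem_inter_iff, Set.mem_preimage, Set.mem_singleton_iff,
      Set.mem_empty_iff_false, iff_false]
    rintro ⟨h1, h2, h3⟩
    exact he (by rw [← h1]; show φ (f x) (g x) = _; simp [h2, h3])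
  have key2 : ∀ p : ℝ × ℝ,
      u ⁻¹' {φ p.1 p.2} ∩ (f ⁻¹' {p.1} ∩ g ⁻¹' {p.2}) = f ⁻¹' {p.1} ∩ g ⁻¹' {p.2} := by
    rintro ⟨c, d⟩
    ext x
    simp only [Set.mem_inter_iff, Set.mem_preimage, Set.mem_singleton_iff]
    constructor
    · rintro ⟨_, h⟩; exact h
    · rintro ⟨h2, h3⟩
      exact ⟨show φ (f x) (g x) = _ by simp [h2, h3], h2, h3⟩
  calc ∑ e ∈ E, e * m.m (u ⁻¹' {e})
      = ∑ e ∈ E, ∑ p ∈ s ×ˢ t, e * m.m (u ⁻¹' {e} ∩ (f ⁻¹' {p.1} ∩ g ⁻¹' {p.2})) := by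
        apply Finset.sum_congr rfl
        intro e _
        rw [fibeq e, Finset.mul_sum]
    _ = ∑ p ∈ s ×ˢ t, ∑ e ∈ E, e * m.m (u ⁻¹' {e} ∩ (f ⁻¹' {p.1} ∩ g ⁻¹' {p.2})) :=
        Finset.sum_comm
    _ = ∑ p ∈ s ×ˢ t, φ p.1 p.2 * m.m (f ⁻¹' {p.1} ∩ g ⁻¹' {p.2}) := by
        apply Finset.sum_congr rfl
        intro p hp
        rw [Finset.sum_eq_single (φ p.1 p.2)]
        · rw [key2 p]
        · intro e _ he
          rw [key1 p hp e he, mean_empty m, mul_zero]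
        · intro hnot
          exact absurd (Finset.mem_image.mpr ⟨p, hp, rfl⟩) hnot

end MeanAux
namespace MeanAux

variable {X : Type*} (m : Mean X)

theorem J_fst {f g : X → ℝ} (hf : (Set.range f).Finite) (hg : (Set.range g).Finite) :
    J m f = ∑ p ∈ hf.toFinset ×ˢ hg.toFinset, p.1 * m.m (f ⁻¹' {p.1} ∩ g ⁻¹' {p.2}) :=
  J_comp₂ m (fun c _ => c) hf hg

theorem J_snd {f g : X → ℝ} (hf : (Set.range f).Finite) (hg : (Set.range g).Finite) :
    J m g = ∑ p ∈ hf.toFinset ×ˢ hg.toFinset, p.2 * m.m (f ⁻¹' {p.1} ∩ g ⁻¹' {p.2}) := by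
  exact J_comp₂ m (fun _ d => d) hf hg

theorem J_add {f g : X → ℝ} (hf : (Set.range f).Finite) (hg : (Set.range g).Finite) :
    J m (fun x => f x + g x) = J m f + J m g := by
  rw [J_comp₂ m (fun c d => c + d) hf hg, J_fst m hf hg, J_snd m hf hg, ← Finset.sum_add_distrib]
  apply Finset.sum_congr rfl
  intro p _
  ring

theorem J_sub {f g : X → ℝ} (hf : (Set.range f).Finite) (hg : (Set.range g).Finite) :
    J m (fun x => f x - g x) = J m f - J m g := by
  rw [J_comp₂ m (fun c d => c - d) hf hg, J_fst m hf hg, J_snd m hf hg, ← Finset.sum_sub_distrib]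
  apply Finset.sum_congr rfl
  intro p _
  ring

theorem J_nonneg {f : X → ℝ} (hf : (Set.range f).Finite) (h0 : ∀ x, 0 ≤ f x) :
    0 ≤ J m f := by
  rw [J_eq_sum m hf hf.toFinset (by simp)]
  apply Finset.sum_nonneg
  intro c hc
  obtain ⟨x, rfl⟩ := hf.mem_toFinset.mp hc
  exact mul_nonneg (h0 x) (m.nonneg _)

theorem J_mono {f g : X → ℝ} (hf : (Set.range f).Finite) (hg : (Set.range g).Finite)
    (h : ∀ x, f x ≤ g x) : J m f ≤ J m g := by
  have hsub : (Set.range (fun x => g x - f x)).Finite := by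
    apply Set.Finite.subset (Set.Finite.image2 Sub.sub hg hf)
    rintro y ⟨x, rfl⟩
    exact Set.mem_image2_of_mem ⟨x, rfl⟩ ⟨x, rfl⟩
  have := J_nonneg m hsub (fun x => by linarith [h x])
  rw [J_sub m hg hf] at this
  linarith

theorem J_const (c : ℝ) : J m (fun _ => c) = c := by
  rw [J_eq_sum m (Set.finite_singleton c |>.subset (by rintro y ⟨x, rfl⟩; rfl)) {c}
    (by rintro y ⟨x, rfl⟩; simp)]
  have : (fun _ : X => c) ⁻¹' {c} = Set.univ := by ext x; simp
  rw [Finset.sum_singleton, this, m.total, mul_one]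

open scoped Classical in
theorem J_indicator (A : Set X) : J m (fun x => if x ∈ A then (1 : ℝ) else 0) = m.m A := by
  have hr : Set.range (fun x => if x ∈ A then (1 : ℝ) else 0) ⊆ ↑({0, 1} : Finset ℝ) := by
    rintro y ⟨x, rfl⟩
    by_cases h : x ∈ A <;> simp [h]
  rw [J_eq_sum m (Set.Finite.subset (Finset.finite_toSet _) hr) _ hr]
  have h1 : (fun x => if x ∈ A then (1 : ℝ) else 0) ⁻¹' {1} = A := by
    ext x; by_cases h : x ∈ A <;> simp [h]
  rw [Finset.sum_insert (by norm_num), Finset.sum_singleton, h1]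
  ring

theorem J_null {f : X → ℝ} (hf : (Set.range f).Finite) {N : Set X}
    (hsupp : ∀ x, f x ≠ 0 → x ∈ N) (hN : m.m N = 0) : J m f = 0 := by
  rw [J_eq_sum m hf hf.toFinset (by simp)]
  apply Finset.sum_eq_zero
  intro c hc
  by_cases h : c = 0
  · simp [h]
  · have : f ⁻¹' {c} ⊆ N := by
      intro x hx
      exact hsupp x (by simp only [Set.mem_preimage, Set.mem_singleton_iff] at hx; rw [hx]; exact h)
    rw [mean_null_subset m this hN, mul_zero]

theorem J_congr_null {f g : X → ℝ} (hf : (Set.range f).Finite) (hg : (Set.range g).Finite)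
    {N : Set X} (hfg : ∀ x, f x ≠ g x → x ∈ N) (hN : m.m N = 0) : J m f = J m g := by
  have hsub : (Set.range (fun x => f x - g x)).Finite := by
    apply Set.Finite.subset (Set.Finite.image2 Sub.sub hf hg)
    rintro y ⟨x, rfl⟩
    exact Set.mem_image2_of_mem ⟨x, rfl⟩ ⟨x, rfl⟩
  have h0 : J m (fun x => f x - g x) = 0 :=
    J_null m hsub (fun x hx => hfg x (by intro h; exact hx (by rw [h, sub_self]))) hN
  rw [J_sub m hf hg] at h0
  linarith

theorem J_comp {f : X → ℝ} (hf : (Set.range f).Finite) {T : X → X} (hT : Function.Bijective T)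
    (hm : ∀ A : Set X, m.m (T '' A) = m.m A) : J m (f ∘ T) = J m f := by
  have hr : Set.range (f ∘ T) ⊆ ↑hf.toFinset := by
    rintro y ⟨x, rfl⟩
    exact Finset.mem_coe.mpr (hf.mem_toFinset.mpr ⟨T x, rfl⟩)
  rw [J_eq_sum m (Set.Finite.subset hf.toFinset.finite_toSet hr) _ hr,
    J_eq_sum m hf hf.toFinset (by simp)]
  apply Finset.sum_congr rfl
  intro c _
  congr 1
  have : (f ∘ T) ⁻¹' {c} = T ⁻¹' (f ⁻¹' {c}) := rfl
  rw [this, ← hm (T ⁻¹' (f ⁻¹' {c})), Set.image_preimage_eq _ hT.surjective]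

end MeanAux
namespace MeanAux

variable {X : Type*} (m : Mean X)

/-- The lower integral against a mean, via finite-range minorants. -/
noncomputable def Integ (f : X → ℝ) : ℝ :=
  sSup {r | ∃ h : X → ℝ, (Set.range h).Finite ∧ (∀ x, h x ≤ f x) ∧ r = J m h}

theorem Integ_set_nonempty {f : X → ℝ} (hf0 : ∀ x, 0 ≤ f x) :
    {r | ∃ h : X → ℝ, (Set.range h).Finite ∧ (∀ x, h x ≤ f x) ∧ r = J m h}.Nonempty :=
  ⟨J m (fun _ => 0), ⟨fun _ => 0,
    Set.finite_singleton 0 |>.subset (by rintro y ⟨x, rfl⟩; rfl), fun x => hf0 x, rfl⟩⟩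

theorem Integ_set_bddAbove {f : X → ℝ} {C : ℝ} (hf1 : ∀ x, f x ≤ C) :
    BddAbove {r | ∃ h : X → ℝ, (Set.range h).Finite ∧ (∀ x, h x ≤ f x) ∧ r = J m h} := by
  refine ⟨C, ?_⟩
  rintro r ⟨h, hfin, hle, rfl⟩
  have hc : (Set.range (fun _ : X => C)).Finite :=
    Set.finite_singleton C |>.subset (by rintro y ⟨x, rfl⟩; rfl)
  have := J_mono m hfin hc (fun x => le_trans (hle x) (hf1 x))
  rwa [J_const m C] at this

theorem le_Integ {f h : X → ℝ} {C : ℝ} (hfin : (Set.range h).Finite) (hle : ∀ x, h x ≤ f x)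
    (hf1 : ∀ x, f x ≤ C) : J m h ≤ Integ m f :=
  le_csSup (Integ_set_bddAbove m hf1) ⟨h, hfin, hle, rfl⟩

theorem Integ_le {f : X → ℝ} (hf0 : ∀ x, 0 ≤ f x) {r : ℝ}
    (hr : ∀ h : X → ℝ, (Set.range h).Finite → (∀ x, h x ≤ f x) → J m h ≤ r) :
    Integ m f ≤ r := by
  apply csSup_le (Integ_set_nonempty m hf0)
  rintro s ⟨h, hfin, hle, rfl⟩
  exact hr h hfin hle

/-- If `f` itself has finite range, the integral is `J`. -/
theorem Integ_of_finite {f : X → ℝ} {C : ℝ} (hfin : (Set.range f).Finite)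
    (hf0 : ∀ x, 0 ≤ f x) (hf1 : ∀ x, f x ≤ C) : Integ m f = J m f := by
  apply le_antisymm
  · exact Integ_le m hf0 (fun h hh hle => J_mono m hh hfin hle)
  · exact le_Integ m hfin (fun x => le_rfl) hf1

theorem Integ_nonneg {f : X → ℝ} {C : ℝ} (hf0 : ∀ x, 0 ≤ f x) (hf1 : ∀ x, f x ≤ C) :
    0 ≤ Integ m f := by
  have hc : (Set.range (fun _ : X => (0:ℝ))).Finite :=
    Set.finite_singleton 0 |>.subset (by rintro y ⟨x, rfl⟩; rfl)
  have := le_Integ m hc (fun x => hf0 x) hf1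
  rwa [J_const m 0] at this

open scoped Classical in
theorem Integ_indicator (A : Set X) :
    Integ m (fun x => if x ∈ A then (1:ℝ) else 0) = m.m A := by
  have h0 : ∀ x, (0:ℝ) ≤ if x ∈ A then (1:ℝ) else 0 := by
    intro x; by_cases h : x ∈ A <;> simp [h]
  have h1 : ∀ x, (if x ∈ A then (1:ℝ) else 0) ≤ 1 := by
    intro x; by_cases h : x ∈ A <;> simp [h]
  have hfin : (Set.range (fun x => if x ∈ A then (1:ℝ) else 0)).Finite := by
    apply Set.Finite.subset ((Set.finite_singleton 1).insert 0)
    rintro y ⟨x, rfl⟩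
    by_cases h : x ∈ A <;> simp [h]
  rw [Integ_of_finite m hfin h0 h1, J_indicator]

theorem Integ_const_one : Integ m (fun _ : X => (1:ℝ)) = 1 := by
  have hc : (Set.range (fun _ : X => (1:ℝ))).Finite :=
    Set.finite_singleton 1 |>.subset (by rintro y ⟨x, rfl⟩; rfl)
  rw [Integ_of_finite m hc (fun _ => zero_le_one) (fun _ => le_rfl), J_const]

/-- layered approximation from below -/
noncomputable def layer (n : ℕ) (f : X → ℝ) : X → ℝ := fun x => (⌊(n:ℝ) * f x⌋ : ℝ) / n

theorem layer_finite {n : ℕ} (hn : 0 < n) {f : X → ℝ} (hf0 : ∀ x, 0 ≤ f x)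
    (hf1 : ∀ x, f x ≤ 1) : (Set.range (layer n f)).Finite := by
  apply Set.Finite.subset (((Set.finite_Icc (0:ℤ) n).image (fun k : ℤ => (k:ℝ)/n)))
  rintro y ⟨x, rfl⟩
  refine ⟨⌊(n:ℝ) * f x⌋, ?_, rfl⟩
  have hn' : (0:ℝ) < n := by exact_mod_cast hn
  constructor
  · exact Int.floor_nonneg.mpr (mul_nonneg hn'.le (hf0 x))
  · have : (n:ℝ) * f x ≤ n := by nlinarith [hf1 x]
    have h2 := Int.floor_le_floor this
    rwa [Int.floor_natCast] at h2

theorem layer_le {n : ℕ} (hn : 0 < n) {f : X → ℝ} (hf0 : ∀ x, 0 ≤ f x) (x : X) :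
    layer n f x ≤ f x := by
  have hn' : (0:ℝ) < n := by exact_mod_cast hn
  rw [layer, div_le_iff₀ hn']
  calc ((⌊(n:ℝ) * f x⌋ : ℝ)) ≤ (n:ℝ) * f x := Int.floor_le _
  _ = f x * n := by ring

theorem le_layer_add {n : ℕ} (hn : 0 < n) {f : X → ℝ} (x : X) :
    f x ≤ layer n f x + 1 / n := by
  have hn' : (0:ℝ) < n := by exact_mod_cast hn
  rw [layer, ← add_div, le_div_iff₀ hn']
  have := Int.lt_floor_add_one ((n:ℝ) * f x)
  nlinarith

theorem layer_nonneg {n : ℕ} (hn : 0 < n) {f : X → ℝ} (hf0 : ∀ x, 0 ≤ f x) (x : X) :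
    0 ≤ layer n f x := by
  have hn' : (0:ℝ) < n := by exact_mod_cast hn
  apply div_nonneg _ hn'.le
  exact_mod_cast Int.floor_nonneg.mpr (mul_nonneg hn'.le (hf0 x))

theorem Integ_add {f g : X → ℝ} (hf0 : ∀ x, 0 ≤ f x) (hf1 : ∀ x, f x ≤ 1)
    (hg0 : ∀ x, 0 ≤ g x) (hg1 : ∀ x, g x ≤ 1) :
    Integ m (fun x => f x + g x) = Integ m f + Integ m g := by
  have hfg0 : ∀ x, 0 ≤ f x + g x := fun x => add_nonneg (hf0 x) (hg0 x)
  apply le_antisymm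
  · -- upper bound: any minorant h of f+g satisfies J h ≤ Integ f + Integ g
    apply Integ_le m hfg0
    intro h hfin hle
    have key : ∀ n : ℕ, 0 < n → J m h ≤ Integ m f + Integ m g + 2 / n := by
      intro n hn
      have hLf := layer_finite hn hf0 hf1
      have hLg := layer_finite hn hg0 hg1
      have hsum : (Set.range (fun x => layer n f x + layer n g x + 2/n)).Finite := by
        apply Set.Finite.subset (Set.Finite.image2 (fun a b : ℝ => a + b + 2/(n:ℝ)) hLf hLg)
        rintro y ⟨x, rfl⟩
        exact Set.mem_image2_of_mem ⟨x, rfl⟩ ⟨x, rfl⟩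
      have hle2 : ∀ x, h x ≤ layer n f x + layer n g x + 2/n := by
        intro x
        have := le_layer_add hn (f := f) x
        have := le_layer_add hn (f := g) x
        have := hle x
        have h2n : 2/(n:ℝ) = 1/n + 1/n := by ring
        linarith
      have step1 : J m h ≤ J m (fun x => layer n f x + layer n g x + 2/n) :=
        J_mono m hfin hsum hle2
      have hLfg : (Set.range (fun x => layer n f x + layer n g x)).Finite := by
        apply Set.Finite.subset (Set.Finite.image2 (· + ·) hLf hLg)
        rintro y ⟨x, rfl⟩
        exact Set.mem_image2_of_mem ⟨x, rfl⟩ ⟨x, rfl⟩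
      have hcn : (Set.range (fun _ : X => 2/(n:ℝ))).Finite :=
        Set.finite_singleton _ |>.subset (by rintro y ⟨x, rfl⟩; rfl)
      have step2 : J m (fun x => layer n f x + layer n g x + 2/n)
          = J m (fun x => layer n f x + layer n g x) + 2/n := by
        have := J_add m hLfg hcn
        rw [J_const] at this
        exact this
      have step3 : J m (fun x => layer n f x + layer n g x) = J m (layer n f) + J m (layer n g) :=
        J_add m hLf hLg
      have step4 : J m (layer n f) ≤ Integ m f :=
        le_Integ m hLf (layer_le hn hf0) hf1
      have step5 : J m (layer n g) ≤ Integ m g :=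
        le_Integ m hLg (layer_le hn hg0) hg1
      linarith
    -- take n → ∞
    by_contra hcon
    push_neg at hcon
    set ε := J m h - (Integ m f + Integ m g) with hε
    have hεpos : 0 < ε := by linarith
    obtain ⟨n, hn⟩ := exists_nat_gt (2 / ε)
    have hn0 : 0 < n := by
      by_contra hn0
      push_neg at hn0
      interval_cases n
      simp at hn
      linarith [div_pos (by norm_num : (0:ℝ) < 2) hεpos]
    have h2n : 2 / (n:ℝ) < ε := by
      rw [div_lt_iff₀ (by exact_mod_cast hn0)]
      rw [div_lt_iff₀ hεpos] at hn
      nlinarith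
    have := key n hn0
    rw [hε] at h2n
    linarith
  · -- lower bound
    have hpair : ∀ r1 ∈ {r | ∃ h : X → ℝ, (Set.range h).Finite ∧ (∀ x, h x ≤ f x) ∧ r = J m h},
        ∀ r2 ∈ {r | ∃ h : X → ℝ, (Set.range h).Finite ∧ (∀ x, h x ≤ g x) ∧ r = J m h},
        r1 + r2 ≤ Integ m (fun x => f x + g x) := by
      rintro r1 ⟨h1, hfin1, hle1, rfl⟩ r2 ⟨h2, hfin2, hle2, rfl⟩
      have hsum : (Set.range (fun x => h1 x + h2 x)).Finite := by
        apply Set.Finite.subset (Set.Finite.image2 (· + ·) hfin1 hfin2)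
        rintro y ⟨x, rfl⟩
        exact Set.mem_image2_of_mem ⟨x, rfl⟩ ⟨x, rfl⟩
      have key := le_Integ m (C := 2) hsum (f := fun x => f x + g x)
        (fun x => add_le_add (hle1 x) (hle2 x))
        (fun x => by show f x + g x ≤ 2; linarith [hf1 x, hg1 x])
      rw [J_add m hfin1 hfin2] at key
      exact key
    have A1 : Integ m f ≤ Integ m (fun x => f x + g x) - Integ m g := by
      refine csSup_le (Integ_set_nonempty m hf0) ?_
      intro r1 hr1
      rw [le_sub_iff_add_le]
      have A2 : Integ m g ≤ Integ m (fun x => f x + g x) - r1 := by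
        refine csSup_le (Integ_set_nonempty m hg0) ?_
        intro r2 hr2
        rw [le_sub_iff_add_le]
        linarith [hpair r1 hr1 r2 hr2]
      linarith
    linarith

end MeanAux
namespace MeanAux

variable {X : Type*} (m : Mean X)

theorem Integ_comp {f : X → ℝ} {T : X → X} (hT : Function.Bijective T)
    (hm : ∀ A : Set X, m.m (T '' A) = m.m A) :
    Integ m (f ∘ T) = Integ m f := by
  set e := Equiv.ofBijective T hT with he
  have hTe : ∀ x, T x = e x := fun x => rfl
  have hsets : {r | ∃ h : X → ℝ, (Set.range h).Finite ∧ (∀ x, h x ≤ (f ∘ T) x) ∧ r = J m h}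
      = {r | ∃ h : X → ℝ, (Set.range h).Finite ∧ (∀ x, h x ≤ f x) ∧ r = J m h} := by
    ext r
    constructor
    · rintro ⟨h, hfin, hle, rfl⟩
      refine ⟨h ∘ e.symm, hfin.subset (by rintro y ⟨x, rfl⟩; exact ⟨e.symm x, rfl⟩), ?_, ?_⟩
      · intro y
        have := hle (e.symm y)
        simpa only [Function.comp_apply, hTe, Equiv.apply_symm_apply] using this
      · have hcomp : (h ∘ e.symm) ∘ T = h := by
          funext x
          simp only [Function.comp_apply, hTe, Equiv.symm_apply_apply]
        have hfin' : (Set.range (h ∘ e.symm)).Finite :=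
          hfin.subset (by rintro y ⟨x, rfl⟩; exact ⟨e.symm x, rfl⟩)
        have := J_comp m hfin' hT hm
        rw [hcomp] at this
        exact this
    · rintro ⟨h, hfin, hle, rfl⟩
      refine ⟨h ∘ T, hfin.subset (by rintro y ⟨x, rfl⟩; exact ⟨T x, rfl⟩),
        fun x => hle (T x), (J_comp m hfin hT hm).symm⟩
  rw [Integ, Integ, hsets]

theorem Integ_congr_null {f g : X → ℝ} {N : Set X} (hN : m.m N = 0)
    (hfg : ∀ x, f x ≠ g x → x ∈ N) (hf0 : ∀ x, 0 ≤ f x) (hg0 : ∀ x, 0 ≤ g x) :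
    Integ m f = Integ m g := by
  classical
  have incl : ∀ (u v : X → ℝ), (∀ x, u x ≠ v x → x ∈ N) → (∀ x, 0 ≤ v x) →
      {r | ∃ h : X → ℝ, (Set.range h).Finite ∧ (∀ x, h x ≤ u x) ∧ r = J m h} ⊆
      {r | ∃ h : X → ℝ, (Set.range h).Finite ∧ (∀ x, h x ≤ v x) ∧ r = J m h} := by
    intro u v huv hv0
    rintro r ⟨h, hfin, hle, rfl⟩
    refine ⟨fun x => if x ∈ N then 0 else h x, ?_, ?_, ?_⟩
    · apply Set.Finite.subset (hfin.insert 0)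
      rintro y ⟨x, rfl⟩
      by_cases hx : x ∈ N
      · simp [hx]
      · simp only [hx, if_false]
        exact Set.mem_insert_of_mem 0 ⟨x, rfl⟩
    · intro x
      by_cases hx : x ∈ N
      · simp [hx, hv0 x]
      · simp only [hx, if_false]
        by_cases hux : u x = v x
        · rw [← hux]; exact hle x
        · exact absurd (huv x hux) hx
    · apply J_congr_null m hfin
      · apply Set.Finite.subset (hfin.insert 0)
        rintro y ⟨x, rfl⟩
        by_cases hx : x ∈ N
        · simp [hx]
        · simp only [hx, if_false]
          exact Set.mem_insert_of_mem 0 ⟨x, rfl⟩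
      · intro x hx
        by_cases hxN : x ∈ N
        · exact hxN
        · simp [hxN] at hx
      · exact hN
  have h1 := incl f g hfg hg0
  have h2 := incl g f (fun x hx => hfg x (Ne.symm hx)) hf0
  rw [Integ, Integ, Set.Subset.antisymm h1 h2]

/-- Build a mean on `Y` by integrating a pointwise family of means. -/
noncomputable def famMean {Y : Type*} (lam : X → Set Y → ℝ)
    (h0 : ∀ x A, 0 ≤ lam x A) (h1 : ∀ x A, lam x A ≤ 1)
    (htot : ∀ x, lam x Set.univ = 1)
    (hadd : ∀ x (A B : Set Y), Disjoint A B → lam x (A ∪ B) = lam x A + lam x B) :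
    Mean Y where
  m A := Integ m (fun x => lam x A)
  nonneg A := Integ_nonneg m (fun x => h0 x A) (fun x => h1 x A)
  total := by
    show Integ m (fun x => lam x Set.univ) = 1
    have : (fun x => lam x Set.univ) = fun _ : X => (1:ℝ) := funext htot
    rw [this, Integ_const_one]
  fin_add A B hAB := by
    show Integ m (fun x => lam x (A ∪ B)) = Integ m (fun x => lam x A) + Integ m (fun x => lam x B)
    have : (fun x => lam x (A ∪ B)) = fun x => lam x A + lam x B :=
      funext (fun x => hadd x A B hAB)
    rw [this, Integ_add m (fun x => h0 x A) (fun x => h1 x A) (fun x => h0 x B)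
      (fun x => h1 x B)]

theorem famMean_apply {Y : Type*} (lam : X → Set Y → ℝ) (h0) (h1) (htot) (hadd) (A : Set Y) :
    (famMean m lam h0 h1 htot hadd).m A = Integ m (fun x => lam x A) := rfl

end MeanAux
namespace MeanAux

theorem amenable_of_finite {K : Type*} [Group K] [Finite K] : AmenableGroup K := by
  refine ⟨⟨fun A => (A.ncard : ℝ) / (Nat.card K : ℝ), ?_, ?_, ?_⟩, ?_⟩
  · intro A
    positivity
  · show ((Set.univ : Set K).ncard : ℝ) / _ = 1
    rw [Set.ncard_univ]
    apply div_self
    exact_mod_cast Nat.card_pos.ne'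
  · intro A B hAB
    show ((A ∪ B).ncard : ℝ) / _ = (A.ncard : ℝ) / _ + (B.ncard : ℝ) / _
    rw [Set.ncard_union_eq hAB A.toFinite B.toFinite]
    push_cast
    ring
  · intro g A
    show ((((fun x => g * x) '' A).ncard : ℝ)) / _ = _
    rw [Set.ncard_image_of_injective A (mul_right_injective g)]

theorem amenable_of_injective {K G' : Type*} [Group K] [Group G'] (f : K →* G')
    (hf : Function.Injective f) (h : AmenableGroup G') : AmenableGroup K := by
  obtain ⟨m, hm⟩ := h
  set s := QuotientGroup.rightRel f.range with hs
  let rep : G' → G' := fun x => (Quotient.mk s x).out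
  have key1 : ∀ x : G', x * (rep x)⁻¹ ∈ f.range := by
    intro x
    have h1 : s (rep x) x := Quotient.mk_out x
    exact (QuotientGroup.rightRel_apply).mp h1
  have key2 : ∀ (h' : G'), h' ∈ f.range → ∀ x, rep (h' * x) = rep x := by
    intro h' hh' x
    have : Quotient.mk s (h' * x) = Quotient.mk s x := by
      apply Quotient.sound
      refine (QuotientGroup.rightRel_apply).mpr ?_
      have hx : x * (h' * x)⁻¹ = h'⁻¹ := by group
      rw [hx]
      exact Subgroup.inv_mem _ hh'
    show (Quotient.mk s (h' * x)).out = (Quotient.mk s x).out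
    rw [this]
  set S : Set K → Set G' := fun A => {x : G' | ∃ a ∈ A, x * (rep x)⁻¹ = f a} with hS
  refine ⟨⟨fun A => m.m (S A), fun A => m.nonneg _, ?_, ?_⟩, ?_⟩
  · have : S Set.univ = Set.univ := by
      ext x
      simp only [hS, Set.mem_setOf_eq, Set.mem_univ, iff_true]
      obtain ⟨a, ha⟩ := key1 x
      exact ⟨a, trivial, ha.symm⟩
    show m.m (S Set.univ) = 1
    rw [this, m.total]
  · intro A B hAB
    show m.m (S (A ∪ B)) = m.m (S A) + m.m (S B)
    have hunion : S (A ∪ B) = S A ∪ S B := by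
      ext x
      simp only [hS, Set.mem_setOf_eq, Set.mem_union]
      constructor
      · rintro ⟨a, ha | hb, hx⟩
        · exact Or.inl ⟨a, ha, hx⟩
        · exact Or.inr ⟨a, hb, hx⟩
      · rintro (⟨a, ha, hx⟩ | ⟨a, ha, hx⟩)
        · exact ⟨a, Or.inl ha, hx⟩
        · exact ⟨a, Or.inr ha, hx⟩
    have hdisj : Disjoint (S A) (S B) := by
      rw [Set.disjoint_left]
      rintro x ⟨a, ha, hx⟩ ⟨b, hb, hx'⟩
      have : a = b := hf (by rw [← hx, ← hx'])
      exact (Set.disjoint_left.mp hAB ha) (this ▸ hb)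
    rw [hunion, m.fin_add _ _ hdisj]
  · intro k A
    show m.m (S ((fun x => k * x) '' A)) = m.m (S A)
    have himg : S ((fun x => k * x) '' A) = (fun x => f k * x) '' (S A) := by
      ext x
      simp only [hS, Set.mem_setOf_eq, Set.mem_image]
      constructor
      · rintro ⟨a, ⟨b, hb, rfl⟩, hx⟩
        refine ⟨(f k)⁻¹ * x, ⟨b, hb, ?_⟩, by group⟩
        have hrep : rep ((f k)⁻¹ * x) = rep x := by
          apply key2
          exact ⟨k⁻¹, by simp⟩
        rw [hrep, map_mul] at *
        rw [mul_assoc, hx]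
        group
      · rintro ⟨y, ⟨b, hb, hy⟩, rfl⟩
        refine ⟨k * b, ⟨b, hb, rfl⟩, ?_⟩
        have hrep : rep (f k * y) = rep y := key2 (f k) ⟨k, rfl⟩ y
        rw [hrep, map_mul, mul_assoc, hy]
    rw [himg, hm (f k) (S A)]

theorem amenable_of_le {G : Type*} [Group G] {H K : Subgroup G} (hHK : H ≤ K)
    (h : AmenableGroup ↥K) : AmenableGroup ↥H :=
  amenable_of_injective (Subgroup.inclusion hHK) (Subgroup.inclusion_injective hHK) h

theorem infinite_of_nonamenable {K : Type*} [Group K] (h : ¬ AmenableGroup K) : Infinite K := by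
  by_contra hinf
  rw [not_infinite_iff_finite] at hinf
  exact h amenable_of_finite

end MeanAux
namespace MeanAux

variable {G : Type*} [Group G]

/-- The orbit equivalence relation of the conjugation action of `M` on `G`. -/
def conjSetoid (M : Subgroup G) : Setoid G where
  r x y := ∃ h ∈ M, h * x * h⁻¹ = y
  iseqv := by
    constructor
    · intro x; exact ⟨1, M.one_mem, by group⟩
    · rintro x y ⟨h, hM, rfl⟩
      exact ⟨h⁻¹, M.inv_mem hM, by group⟩
    · rintro x y z ⟨h, hM, rfl⟩ ⟨k, kM, rfl⟩
      exact ⟨k * h, M.mul_mem kM hM, by group⟩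

theorem amenable_of_finite_stabilizers (m : Mean G) (M : Subgroup G) (B : Set G)
    (hinv : ∀ h ∈ M, ∀ A : Set G, m.m ((fun x => h * x * h⁻¹) '' A) = m.m A)
    (hBpos : 0 < m.m B)
    (hBinv : ∀ g ∈ B, ∀ h ∈ M, h * g * h⁻¹ ∈ B)
    (hstab : ∀ g ∈ B, {h : ↥M | (h : G) * g * (h : G)⁻¹ = g}.Finite) :
    AmenableGroup ↥M := by
  classical
  -- normalized restriction of m to B
  set m' : Mean G := ⟨fun A => m.m (A ∩ B) / m.m B,
    fun A => div_nonneg (m.nonneg _) (m.nonneg _),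
    by show m.m (Set.univ ∩ B) / m.m B = 1
       rw [Set.univ_inter]; exact div_self hBpos.ne',
    by
      intro A A' hd
      show m.m ((A ∪ A') ∩ B) / m.m B = m.m (A ∩ B) / m.m B + m.m (A' ∩ B) / m.m B
      rw [Set.union_inter_distrib_right,
        m.fin_add _ _ (hd.mono Set.inter_subset_left Set.inter_subset_left)]
      ring⟩ with hm'
  have hm'app : ∀ A : Set G, m'.m A = m.m (A ∩ B) / m.m B := fun A => rfl
  have hBc : m'.m Bᶜ = 0 := by
    rw [hm'app, Set.compl_inter_self, mean_empty m, zero_div]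
  have hconjB : ∀ h ∈ M, (fun x => h * x * h⁻¹) '' B = B := by
    intro h hM
    apply Set.Subset.antisymm
    · rintro y ⟨x, hx, rfl⟩
      exact hBinv x hx h hM
    · intro y hy
      exact ⟨h⁻¹ * y * h, by simpa using hBinv y hy h⁻¹ (M.inv_mem hM), by group⟩
  have hinv' : ∀ h ∈ M, ∀ A : Set G, m'.m ((fun x => h * x * h⁻¹) '' A) = m'.m A := by
    intro h hM A
    rw [hm'app, hm'app]
    congr 1
    have himg : (fun x => h * x * h⁻¹) '' A ∩ B = (fun x => h * x * h⁻¹) '' (A ∩ B) := by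
      rw [← hconjB h hM, ← Set.image_inter]
      · rw [hconjB h hM]
      · intro a b hab
        have : h * a = h * b := by
          have := congrArg (fun z => z * h) hab
          simpa [mul_assoc] using this
        exact mul_left_cancel this
    rw [himg, hinv h hM (A ∩ B)]
  -- orbit representatives
  set rep : G → G := fun x => (Quotient.mk (conjSetoid M) x).out with hrepdef
  have hrep1 : ∀ x : G, ∃ h ∈ M, h * rep x * h⁻¹ = x := by
    intro x
    have h1 : (conjSetoid M) (rep x) x := Quotient.mk_out x
    exact h1
  have hrep2 : ∀ h ∈ M, ∀ x : G, rep (h * x * h⁻¹) = rep x := by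
    intro h hM x
    have : Quotient.mk (conjSetoid M) (h * x * h⁻¹) = Quotient.mk (conjSetoid M) x := by
      apply Quotient.sound
      exact ⟨h⁻¹, M.inv_mem hM, by group⟩
    show (Quotient.mk (conjSetoid M) (h * x * h⁻¹)).out = (Quotient.mk (conjSetoid M) x).out
    rw [this]
  have hrepB : ∀ x ∈ B, rep x ∈ B := by
    intro x hx
    obtain ⟨h, hM, hh⟩ := hrep1 x
    have e : h⁻¹ * x * h⁻¹⁻¹ = rep x := by
      conv_lhs => rw [← hh]
      group
    have := hBinv x hx h⁻¹ (M.inv_mem hM)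
    rwa [e] at this
  -- the coset of elements moving `rep x` to `x`
  set σ : G → Set ↥M := fun x => {h : ↥M | (h : G) * rep x * (h : G)⁻¹ = x} with hσ
  have σ_nonempty : ∀ x : G, (σ x).Nonempty := by
    intro x
    obtain ⟨h, hM, hh⟩ := hrep1 x
    exact ⟨⟨h, hM⟩, hh⟩
  have σ_finite : ∀ x ∈ B, (σ x).Finite := by
    intro x hx
    obtain ⟨h₀, hh₀⟩ := σ_nonempty x
    apply Set.Finite.subset (((hstab (rep x) (hrepB x hx)).image (fun s => h₀ * s)))
    intro h hh
    refine ⟨h₀⁻¹ * h, ?_, by group⟩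
    show ((h₀⁻¹ * h : ↥M) : G) * rep x * ((h₀⁻¹ * h : ↥M) : G)⁻¹ = rep x
    have hh' : (h : G) * rep x * (h : G)⁻¹ = x := hh
    have hh₀' : (h₀ : G) * rep x * (h₀ : G)⁻¹ = x := hh₀
    push_cast
    have : (h₀ : G)⁻¹ * x * (h₀ : G) = rep x := by
      conv_lhs => rw [← hh₀']
      group
    calc (h₀ : G)⁻¹ * (h : G) * rep x * ((h₀ : G)⁻¹ * (h : G))⁻¹
        = (h₀ : G)⁻¹ * ((h : G) * rep x * (h : G)⁻¹) * (h₀ : G) := by group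
      _ = (h₀ : G)⁻¹ * x * (h₀ : G) := by rw [hh']
      _ = rep x := this
  have σ_equiv : ∀ (k : ↥M) (x : G), σ ((k : G) * x * (k : G)⁻¹) = (fun h => k * h) '' σ x := by
    intro k x
    ext h
    simp only [hσ, Set.mem_setOf_eq, Set.mem_image]
    rw [hrep2 (k : G) k.2 x]
    constructor
    · intro hh
      refine ⟨k⁻¹ * h, ?_, by group⟩
      show ((k⁻¹ * h : ↥M) : G) * rep x * ((k⁻¹ * h : ↥M) : G)⁻¹ = x
      push_cast
      calc (k : G)⁻¹ * (h : G) * rep x * ((k : G)⁻¹ * (h : G))⁻¹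
          = (k : G)⁻¹ * ((h : G) * rep x * (h : G)⁻¹) * (k : G) := by group
        _ = (k : G)⁻¹ * ((k : G) * x * (k : G)⁻¹) * (k : G) := by rw [hh]
        _ = x := by group
    · rintro ⟨h', hh', rfl⟩
      show ((k * h' : ↥M) : G) * rep x * ((k * h' : ↥M) : G)⁻¹ = (k : G) * x * (k : G)⁻¹
      push_cast
      have : (h' : G) * rep x * (h' : G)⁻¹ = x := hh'
      calc (k : G) * (h' : G) * rep x * ((k : G) * (h' : G))⁻¹
          = (k : G) * ((h' : G) * rep x * (h' : G)⁻¹) * (k : G)⁻¹ := by group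
        _ = (k : G) * x * (k : G)⁻¹ := by rw [this]
  -- the family of local means
  set lam : G → Set ↥M → ℝ := fun x A =>
    if x ∈ B then ((σ x ∩ A).ncard : ℝ) / ((σ x).ncard : ℝ)
    else (if (1 : ↥M) ∈ A then 1 else 0) with hlam
  have ncard_pos : ∀ x ∈ B, 0 < ((σ x).ncard : ℝ) := by
    intro x hx
    exact_mod_cast (Set.ncard_pos (σ_finite x hx)).mpr (σ_nonempty x)
  have lam0 : ∀ x A, 0 ≤ lam x A := by
    intro x A
    by_cases hx : x ∈ B
    · simp only [hlam, hx, if_true]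
      positivity
    · simp only [hlam, hx, if_false]
      by_cases h1 : (1 : ↥M) ∈ A <;> simp [h1]
  have lam1 : ∀ x A, lam x A ≤ 1 := by
    intro x A
    by_cases hx : x ∈ B
    · simp only [hlam, hx, if_true]
      rw [div_le_one (ncard_pos x hx)]
      exact_mod_cast Set.ncard_le_ncard Set.inter_subset_left (σ_finite x hx)
    · simp only [hlam, hx, if_false]
      by_cases h1 : (1 : ↥M) ∈ A <;> simp [h1]
  have lamtot : ∀ x, lam x Set.univ = 1 := by
    intro x
    by_cases hx : x ∈ B
    · simp only [hlam, hx, if_true, Set.inter_univ]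
      exact div_self (ncard_pos x hx).ne'
    · simp [hlam, hx]
  have lamadd : ∀ x (A A' : Set ↥M), Disjoint A A' → lam x (A ∪ A') = lam x A + lam x A' := by
    intro x A A' hd
    by_cases hx : x ∈ B
    · simp only [hlam, hx, if_true]
      rw [Set.inter_union_distrib_left,
        Set.ncard_union_eq (hd.mono Set.inter_subset_right Set.inter_subset_right)
          ((σ_finite x hx).subset Set.inter_subset_left)
          ((σ_finite x hx).subset Set.inter_subset_left)]
      push_cast
      ring
    · simp only [hlam, hx, if_false]
      by_cases h1 : (1 : ↥M) ∈ A
      · have h2 : (1 : ↥M) ∉ A' := fun h => (Set.disjoint_left.mp hd h1) h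
        simp [h1, h2]
      · by_cases h2 : (1 : ↥M) ∈ A'
        · simp [h1, h2]
        · have : (1 : ↥M) ∉ A ∪ A' := by simp [h1, h2]
          simp [h1, h2, this]
  -- the resulting mean on M
  refine ⟨famMean m' lam lam0 lam1 lamtot lamadd, ?_⟩
  intro k A
  rw [famMean_apply, famMean_apply]
  set T : G → G := fun x => (k : G)⁻¹ * x * (k : G) with hT
  have hTbij : Function.Bijective T := by
    constructor
    · intro a b hab
      simp only [hT] at hab
      have h1 := mul_right_cancel hab
      exact mul_left_cancel h1
    · intro y
      exact ⟨(k : G) * y * (k : G)⁻¹, by simp only [hT]; group⟩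
  have hTm : ∀ A : Set G, m'.m (T '' A) = m'.m A := by
    intro A
    have : T = fun x => (k : G)⁻¹ * x * ((k : G)⁻¹)⁻¹ := by
      funext x; simp only [hT, inv_inv]
    rw [this]
    exact hinv' (k : G)⁻¹ (M.inv_mem k.2) A
  have step1 : Integ m' (fun x => lam x ((fun a => k * a) '' A))
      = Integ m' ((fun x => lam x A) ∘ T) := by
    apply Integ_congr_null m' hBc
    · intro x hx
      by_contra hxB
      apply hx
      have hxB' : x ∈ B := by rwa [Set.notMem_compl_iff] at hxB
      have hTxB : T x ∈ B := by
        have := hBinv x hxB' (k : G)⁻¹ (M.inv_mem k.2)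
        simpa [hT, inv_inv] using this
      have hTx : T x = ((k⁻¹ : ↥M) : G) * x * ((k⁻¹ : ↥M) : G)⁻¹ := by
        simp only [hT]
        push_cast
        rw [inv_inv]
      have hσT : σ (T x) = (fun h => k⁻¹ * h) '' σ x := by
        rw [hTx]
        exact σ_equiv k⁻¹ x
      have hinj : Function.Injective (fun h : ↥M => k⁻¹ * h) := fun a b hab =>
        mul_left_cancel hab
      have hcap : σ (T x) ∩ A = (fun h => k⁻¹ * h) '' (σ x ∩ (fun a => k * a) '' A) := by
        rw [hσT]
        ext h
        simp only [Set.mem_inter_iff, Set.mem_image]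
        constructor
        · rintro ⟨⟨h', hh', rfl⟩, hA⟩
          exact ⟨h', ⟨hh', ⟨k⁻¹ * h', hA, by group⟩⟩, rfl⟩
        · rintro ⟨h', ⟨hh', a, ha, rfl⟩, rfl⟩
          exact ⟨⟨k * a, hh', by group⟩, by simpa using ha⟩
      show lam x ((fun a => k * a) '' A) = ((fun x => lam x A) ∘ T) x
      show lam x ((fun a => k * a) '' A) = lam (T x) A
      simp only [hlam, hxB', hTxB, if_true]
      rw [hcap, Set.ncard_image_of_injective _ hinj, hσT, Set.ncard_image_of_injective _ hinj]
    · intro x; exact lam0 x _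
    · intro x; exact lam0 (T x) A
  have step2 : Integ m' ((fun x => lam x A) ∘ T) = Integ m' (fun x => lam x A) :=
    Integ_comp m' hTbij hTm
  rw [step1, step2]

end MeanAux
namespace MeanAux

variable {G : Type*} [Group G]

/-- One step of the q-normal closure. -/
def Fstep (K : Subgroup G) : Subgroup G :=
  Subgroup.closure {g : G | g ∈ (⊤ : Subgroup G) ∧
    ((Subgroup.map (MulAut.conj g).toMonoidHom K ⊓ K : Subgroup G) : Set G).Infinite}

theorem le_Fstep {K : Subgroup G} (hK : (K : Set G).Infinite) : K ≤ Fstep K := by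
  intro g hg
  apply Subgroup.subset_closure
  refine ⟨Subgroup.mem_top g, ?_⟩
  apply hK.mono
  intro x hx
  refine Subgroup.mem_inf.mpr ⟨?_, hx⟩
  refine Subgroup.mem_map.mpr ⟨g⁻¹ * x * g, ?_, ?_⟩
  · exact K.mul_mem (K.mul_mem (K.inv_mem hg) hx) hg
  · show g * (g⁻¹ * x * g) * g⁻¹ = x
    group

noncomputable def chain (H : Subgroup G) : Ordinal.{0} → Subgroup G :=
  WellFounded.fix Ordinal.lt_wf
    (fun α ih => if α = 0 then H else Fstep (⨆ β : {β : Ordinal.{0} // β < α}, ih β.1 β.2))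

theorem chain_def (H : Subgroup G) (α : Ordinal.{0}) :
    chain H α = if α = 0 then H
      else Fstep (⨆ β : {β : Ordinal.{0} // β < α}, chain H β.1) := by
  rw [chain, WellFounded.fix_eq]

theorem chain_zero (H : Subgroup G) : chain H 0 = H := by rw [chain_def]; simp

theorem chain_pos (H : Subgroup G) {α : Ordinal.{0}} (hα : α ≠ 0) :
    chain H α = Fstep (⨆ β : {β : Ordinal.{0} // β < α}, chain H β.1) := by
  rw [chain_def, if_neg hα]

theorem chain_mono {H : Subgroup G} (hH : (H : Set G).Infinite) :
    ∀ α β : Ordinal.{0}, α ≤ β → chain H α ≤ chain H β := by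
  intro α β hab
  rcases eq_or_lt_of_le hab with rfl | hlt
  · exact le_rfl
  · have hβ0 : β ≠ 0 := by
      intro h
      rw [h] at hlt
      exact absurd hlt not_lt_zero
    rw [chain_pos H hβ0]
    set S := ⨆ β' : {β' : Ordinal.{0} // β' < β}, chain H β'.1 with hS
    have h1 : chain H α ≤ S := le_iSup (fun β' : {β' : Ordinal.{0} // β' < β} => chain H β'.1)
      ⟨α, hlt⟩
    have h0 : H ≤ S := by
      have := le_iSup (fun β' : {β' : Ordinal.{0} // β' < β} => chain H β'.1)
        ⟨0, lt_of_le_of_lt zero_le hlt⟩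
      rwa [chain_zero] at this
    have hSinf : (S : Set G).Infinite := hH.mono h0
    exact le_trans h1 (le_Fstep hSinf)

theorem chain_succ (H : Subgroup G) (hH : (H : Set G).Infinite) (α : Ordinal.{0}) :
    chain H (α + 1) = Fstep (chain H α) := by
  have hne : α + 1 ≠ 0 := by
    rw [Ordinal.add_one_eq_succ]
    exact (Order.succ_ne_bot α)
  rw [chain_pos H hne]
  congr 1
  apply le_antisymm
  · apply iSup_le
    rintro ⟨β, hβ⟩
    apply chain_mono hH
    rw [Ordinal.add_one_eq_succ, Order.lt_succ_iff] at hβ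
    exact hβ
  · exact le_iSup (fun β : {β : Ordinal.{0} // β < α + 1} => chain H β.1)
      ⟨α, by rw [Ordinal.add_one_eq_succ]; exact Order.lt_succ α⟩

theorem exists_chain_fixed [Countable G] (H : Subgroup G) (hH : (H : Set G).Infinite) :
    ∃ α : Ordinal.{0}, chain H (α + 1) = chain H α := by
  by_contra hcon
  push_neg at hcon
  have hstrict : ∀ α : Ordinal.{0}, ∃ x : G, x ∈ chain H (α + 1) ∧ x ∉ chain H α := by
    intro α
    have hle : chain H α ≤ chain H (α + 1) := chain_mono hH _ _ (le_of_lt (by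
      rw [Ordinal.add_one_eq_succ]; exact Order.lt_succ α))
    have hne := hcon α
    rcases SetLike.exists_of_lt (lt_of_le_of_ne hle (Ne.symm hne)) with ⟨x, hx1, hx2⟩
    exact ⟨x, hx1, hx2⟩
  choose g hg1 hg2 using hstrict
  have hginj : ∀ α β : Ordinal.{0}, α < β → g α ≠ g β := by
    intro α β hab heq
    have h1 : g α ∈ chain H β := chain_mono hH (α + 1) β (by
      rw [Ordinal.add_one_eq_succ]; exact Order.succ_le_iff.mpr hab) (hg1 α)
    rw [heq] at h1
    exact hg2 β h1
  set o := (Cardinal.aleph 1).ord with ho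
  obtain ⟨e, he⟩ := Countable.exists_injective_nat G
  set ti : o.ToType → Ordinal.{0} :=
    fun i => @Ordinal.typein o.ToType (· < ·) isWellOrder_lt i with hti
  have ti_inj : Function.Injective ti := by
    intro i j h
    exact (@Ordinal.typein_inj o.ToType (· < ·) isWellOrder_lt i j).mp h
  set f : o.ToType → ℕ := fun i => e (g (ti i)) with hf
  have hfinj : Function.Injective f := by
    intro i j hij
    have h2 : g (ti i) = g (ti j) := he hij
    by_contra hne
    have hne' : ti i ≠ ti j := fun h => hne (ti_inj h)
    rcases lt_or_gt_of_ne hne' with h | h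
    · exact hginj _ _ h h2
    · exact hginj _ _ h h2.symm
  have hcard : (Cardinal.aleph 1) ≤ Cardinal.aleph0 := by
    have h1 : Cardinal.mk o.ToType ≤ Cardinal.mk ℕ := Cardinal.mk_le_of_injective hfinj
    rw [Cardinal.mk_toType, ho, Cardinal.card_ord, Cardinal.mk_nat] at h1
    exact h1
  exact absurd hcard (not_le.mpr Cardinal.aleph0_lt_aleph_one)

end MeanAux
namespace MeanAux

variable {G : Type*} [Group G]

theorem coe_conj_inf (g : G) (M : Subgroup G) :
    ((Subgroup.map (MulAut.conj g).toMonoidHom M ⊓ M : Subgroup G) : Set G)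
      = {x : G | g⁻¹ * x * g ∈ M ∧ x ∈ M} := by
  ext x
  simp only [SetLike.mem_coe, Subgroup.mem_inf, Subgroup.mem_map, Set.mem_setOf_eq]
  constructor
  · rintro ⟨⟨y, hy, rfl⟩, h2⟩
    refine ⟨?_, h2⟩
    have : g⁻¹ * ((MulAut.conj g).toMonoidHom y) * g = y := by
      show g⁻¹ * (g * y * g⁻¹) * g = y
      group
    rwa [this]
  · rintro ⟨h1, h2⟩
    refine ⟨⟨g⁻¹ * x * g, h1, ?_⟩, h2⟩
    show g * (g⁻¹ * x * g) * g⁻¹ = x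
    group

/-- A subgroup which is a fixed point of `Fstep`, is nonamenable, and lives in a group with
an atomless conjugation-invariant mean, must be everything. -/
theorem fixed_top (m : Mean G) (hat : ∀ g : G, m.m {g} = 0)
    (hconj : ∀ (g : G) (A : Set G), m.m ((fun x => g * x * g⁻¹) '' A) = m.m A)
    (M : Subgroup G) (hMna : ¬ AmenableGroup ↥M) (hfix : Fstep M = M) : M = ⊤ := by
  classical
  set B := {g : G | ({x : G | g⁻¹ * x * g ∈ M ∧ x ∈ M} : Set G).Finite} with hB
  -- if B had positive measure, M would be amenable
  have hmB : m.m B = 0 := by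
    by_contra hne
    have hBpos : 0 < m.m B := lt_of_le_of_ne (m.nonneg B) (Ne.symm hne)
    apply hMna
    apply amenable_of_finite_stabilizers m M B (fun h _ A => hconj h A) hBpos
    · -- B is invariant under conjugation by M
      intro g hg h hM
      have himg : {x : G | (h*g*h⁻¹)⁻¹ * x * (h*g*h⁻¹) ∈ M ∧ x ∈ M}
          = (fun x => h * x * h⁻¹) '' {x : G | g⁻¹ * x * g ∈ M ∧ x ∈ M} := by
        ext x
        simp only [Set.mem_setOf_eq, Set.mem_image]
        constructor
        · rintro ⟨h1, h2⟩
          refine ⟨h⁻¹ * x * h, ⟨?_, ?_⟩, by group⟩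
          · have key : g⁻¹ * (h⁻¹ * x * h) * g
                = h⁻¹ * ((h*g*h⁻¹)⁻¹ * x * (h*g*h⁻¹)) * h := by group
            rw [key]
            exact M.mul_mem (M.mul_mem (M.inv_mem hM) h1) hM
          · exact M.mul_mem (M.mul_mem (M.inv_mem hM) h2) hM
        · rintro ⟨y, ⟨h1, h2⟩, rfl⟩
          constructor
          · have key : (h*g*h⁻¹)⁻¹ * (h * y * h⁻¹) * (h*g*h⁻¹)
                = h * (g⁻¹ * y * g) * h⁻¹ := by group
            rw [key]
            exact M.mul_mem (M.mul_mem hM h1) (M.inv_mem hM)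
          · exact M.mul_mem (M.mul_mem hM h2) (M.inv_mem hM)
      show {x : G | (h*g*h⁻¹)⁻¹ * x * (h*g*h⁻¹) ∈ M ∧ x ∈ M}.Finite
      rw [himg]
      exact Set.Finite.image _ hg
    · -- stabilizers are finite on B
      intro g hg
      have hsub : {h : ↥M | (h : G) * g * (h : G)⁻¹ = g}
          ⊆ Subtype.val ⁻¹' {x : G | g⁻¹ * x * g ∈ M ∧ x ∈ M} := by
        intro h hh
        have hcomm : (h : G) * g = g * (h : G) := by
          have : (h : G) * g * (h : G)⁻¹ = g := hh
          calc (h : G) * g = ((h : G) * g * (h : G)⁻¹) * (h : G) := by group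
          _ = g * (h : G) := by rw [this]
        constructor
        · show g⁻¹ * (h : G) * g ∈ M
          have : g⁻¹ * (h : G) * g = (h : G) := by
            calc g⁻¹ * (h : G) * g = g⁻¹ * ((h : G) * g) := by group
            _ = g⁻¹ * (g * (h : G)) := by rw [hcomm]
            _ = (h : G) := by group
          rw [this]
          exact h.2
        · exact h.2
      apply Set.Finite.subset _ hsub
      exact Set.Finite.preimage (Set.injOn_of_injective Subtype.val_injective) hg
  -- hence the complement of B has full measure and is contained in M
  have hBc : m.m Bᶜ = 1 := by rw [mean_compl, hmB]; norm_num
  have hBcM : Bᶜ ⊆ (M : Set G) := by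
    intro g hg
    have hinf : (((Subgroup.map (MulAut.conj g).toMonoidHom M ⊓ M) : Subgroup G) : Set G).Infinite := by
      rw [coe_conj_inf]
      exact hg
    have : g ∈ Fstep M := Subgroup.subset_closure ⟨Subgroup.mem_top g, hinf⟩
    rwa [hfix] at this
  have hmM : m.m (M : Set G) = 1 :=
    le_antisymm (mean_le_one m _) (hBc ▸ mean_mono m hBcM)
  -- conclude
  by_contra hMtop
  obtain ⟨t, ht⟩ : ∃ t : G, t ∉ M := by
    by_contra hc
    push_neg at hc
    exact hMtop ((Subgroup.eq_top_iff' M).mpr hc)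
  have hmMt : m.m ((fun x => t * x * t⁻¹) '' (M : Set G)) = 1 := by
    rw [hconj t (M : Set G), hmM]
  have hint : 1 ≤ m.m ((M : Set G) ∩ (fun x => t * x * t⁻¹) '' (M : Set G)) := by
    have := mean_inter_ge m (M : Set G) ((fun x => t * x * t⁻¹) '' (M : Set G))
    rw [hmM, hmMt] at this
    linarith
  have htB : t ∈ B := by
    by_contra htB
    have : t ∈ Bᶜ := htB
    exact ht (hBcM this)
  have hfin : ((M : Set G) ∩ (fun x => t * x * t⁻¹) '' (M : Set G)).Finite := by
    apply Set.Finite.subset htB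
    rintro x ⟨hx1, y, hy, rfl⟩
    refine ⟨?_, ?_⟩
    · show t⁻¹ * (t * y * t⁻¹) * t ∈ M
      have : t⁻¹ * (t * y * t⁻¹) * t = y := by group
      rwa [this]
    · exact hx1
  have := mean_finite_zero m hat hfin
  linarith

end MeanAux
/-- Theorem: in a nonamenable inner amenable countable group, every nonamenable subgroup
is wq-normal. -/
theorem nonamenable_subgroup_wq_normal {G : Type*} [Group G] [Countable G]
    (hG : ¬ AmenableGroup G) (hIA : InnerAmenable G)
    (H : Subgroup G) (hH : ¬ AmenableGroup ↥H) :
    IsWQNormal H ⊤ := by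
  classical
  obtain ⟨m, hat, hconj⟩ := hIA
  have hHinf : (H : Set G).Infinite := by
    have : Infinite ↥H := MeanAux.infinite_of_nonamenable hH
    exact Set.infinite_coe_iff.mp this
  obtain ⟨α₀, hα₀⟩ := MeanAux.exists_chain_fixed H hHinf
  set M := MeanAux.chain H α₀ with hM
  have hfix : MeanAux.Fstep M = M := by
    rw [← MeanAux.chain_succ H hHinf α₀]
    exact hα₀
  have hHM : H ≤ M := by
    have := MeanAux.chain_mono hHinf 0 α₀ zero_le
    rwa [MeanAux.chain_zero] at this
  have hMna : ¬ AmenableGroup ↥M := fun h => hH (MeanAux.amenable_of_le hHM h)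
  have hMtop : M = ⊤ := MeanAux.fixed_top m hat hconj M hMna hfix
  refine ⟨α₀ + 1, MeanAux.chain H, ?_, MeanAux.chain_zero H, ?_, ?_⟩
  · intro α β hab _
    exact MeanAux.chain_mono hHinf α β hab
  · rw [hα₀]
    exact hMtop
  · intro α hpos hle
    set K := ⨆ (β : Ordinal.{0}) (_ : β < α), MeanAux.chain H β with hK
    have hKsub : (⨆ β : {β : Ordinal.{0} // β < α}, MeanAux.chain H β.1) = K := by
      rw [hK, iSup_subtype]
    have hchainα : MeanAux.chain H α = MeanAux.Fstep K := by
      rw [MeanAux.chain_pos H hpos.ne', hKsub]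
    have hHK : H ≤ K := by
      have := le_iSup₂ (f := fun (β : Ordinal.{0}) (_ : β < α) => MeanAux.chain H β) 0 hpos
      rwa [MeanAux.chain_zero] at this
    have hKinf : (K : Set G).Infinite := hHinf.mono hHK
    constructor
    · rw [hchainα]
      exact MeanAux.le_Fstep hKinf
    · have hSS : {g : G | g ∈ MeanAux.chain H α ∧
          ((Subgroup.map (MulAut.conj g).toMonoidHom K ⊓ K : Subgroup G) : Set G).Infinite}
          = {g : G | g ∈ (⊤ : Subgroup G) ∧
          ((Subgroup.map (MulAut.conj g).toMonoidHom K ⊓ K : Subgroup G) : Set G).Infinite} := by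
        ext g
        simp only [Set.mem_setOf_eq, Subgroup.mem_top, true_and]
        constructor
        · rintro ⟨_, h⟩
          exact h
        · intro h
          refine ⟨?_, h⟩
          rw [hchainα]
          exact Subgroup.subset_closure ⟨Subgroup.mem_top g, h⟩
      rw [hSS, ← MeanAux.Fstep, ← hchainα]
end

section
/- Let G be a countable group with a subgroup H such that the pair (G,H) is inner amenable and H is nonamenable. Then at least one of the following holds: (1) for every finite collection F of nonamenable subgroups of H there exists an infinite amenable subgroup K of G such that L ∩ C_G(K) is nonamenable for all L ∈ F; (2) for every finite collection F of nonamenable subgroups of H there exists an increasing sequence M_0 ≤ M_1 ≤ ⋯ of finite subgroups of G with |M_n| → ∞ such that L ∩ C_G(M_n) is nonamenable for all L ∈ F and all n ∈ ℕ; (3) for every finite collection F of nonamenable subgroups of H there exists a nonamenable subgroup K of G such that L ∩ C_G(K) is nonamenable for all L ∈ F. -/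
open Pointwise

/-- The pair `(G,H)` is inner amenable: there is an atomless mean on `G` invariant under
conjugation by elements of `H`. -/
def PairInnerAmenable {G : Type*} [Group G] (H : Subgroup G) : Prop :=
  ∃ m : Mean G, (∀ g : G, m.m {g} = 0) ∧
    ∀ h ∈ H, ∀ A : Set G, m.m ((fun x => h * x * h⁻¹) '' A) = m.m A


section Aux

namespace Mean
variable {X : Type*} (m : Mean X)

lemma empty : m.m ∅ = 0 := by
  have h := m.fin_add Set.univ ∅ (by simp)
  rw [Set.union_empty, m.total] at h; linarith

lemma diff (A B : Set X) (h : A ⊆ B) : m.m B = m.m A + m.m (B \ A) := by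
  have h2 := m.fin_add A (B \ A) disjoint_sdiff_self_right
  rwa [Set.union_diff_cancel h] at h2

lemma mono {A B : Set X} (h : A ⊆ B) : m.m A ≤ m.m B := by
  have := m.diff A B h; have := m.nonneg (B \ A); linarith

lemma le_one (A : Set X) : m.m A ≤ 1 := by
  rw [← m.total]; exact m.mono (Set.subset_univ A)

lemma subadd (A B : Set X) : m.m (A ∪ B) ≤ m.m A + m.m B := by
  have h1 : m.m (A ∪ B) = m.m A + m.m ((A ∪ B) \ A) := m.diff A (A ∪ B) Set.subset_union_left
  have h2 : m.m ((A ∪ B) \ A) ≤ m.m B := m.mono (by intro x hx; rcases hx with ⟨hx1|hx1, hx2⟩ <;> tauto)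
  linarith

lemma compl (A : Set X) : m.m Aᶜ = 1 - m.m A := by
  have h := m.fin_add A Aᶜ disjoint_compl_right
  rw [Set.union_compl_self, m.total] at h; linarith

lemma null_union {A B : Set X} (hA : m.m A = 0) (hB : m.m B = 0) : m.m (A ∪ B) = 0 :=
  le_antisymm (by have := m.subadd A B; linarith) (m.nonneg _)


/-- measure of a set as sum over pieces of a finite disjoint cover -/
lemma partition {ι : Type*} (s : Finset ι) (C : ι → Set X) (A : Set X)
    (hdisj : ∀ i ∈ s, ∀ j ∈ s, i ≠ j → Disjoint (C i) (C j))
    (hcov : A ⊆ ⋃ i ∈ s, C i) : m.m A = ∑ i ∈ s, m.m (A ∩ C i) := by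
  classical
  induction s using Finset.induction_on generalizing A with
  | empty => simp at hcov; simp [hcov, m.empty]
  | insert i s hni ih =>
    rw [Finset.sum_insert hni]
    have hAsplit : m.m A = m.m (A ∩ C i) + m.m (A \ C i) := by
      have := m.diff (A ∩ C i) A Set.inter_subset_left
      rwa [Set.diff_self_inter] at this
    have hrest : m.m (A \ C i) = ∑ j ∈ s, m.m ((A \ C i) ∩ C j) := by
      apply ih
      · intro a ha b hb hab
        exact hdisj a (Finset.mem_insert_of_mem ha) b (Finset.mem_insert_of_mem hb) hab
      · intro x hx
        have := hcov hx.1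
        simp only [Finset.mem_insert, Set.mem_iUnion] at this ⊢
        rcases this with ⟨j, hj | hj, hxj⟩
        · exact absurd (hj ▸ hxj) hx.2
        · exact ⟨j, hj, hxj⟩
    have heq : ∀ j ∈ s, (A \ C i) ∩ C j = A ∩ C j := by
      intro j hj
      have hd := hdisj i (Finset.mem_insert_self i s) j (Finset.mem_insert_of_mem hj)
        (by rintro rfl; exact hni hj)
      ext x; constructor
      · rintro ⟨⟨h1, _⟩, h2⟩; exact ⟨h1, h2⟩
      · rintro ⟨h1, h2⟩
        exact ⟨⟨h1, fun hxi => Set.disjoint_left.mp hd hxi h2⟩, h2⟩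
    rw [hAsplit, hrest, Finset.sum_congr rfl (fun j hj => by rw [heq j hj])]

lemma null_biUnion {ι : Type*} (s : Finset ι) (C : ι → Set X)
    (h : ∀ i ∈ s, m.m (C i) = 0) : m.m (⋃ i ∈ s, C i) = 0 := by
  classical
  induction s using Finset.induction_on with
  | empty => simp [m.empty]
  | insert i s hni ih =>
    rw [Finset.set_biUnion_insert]
    exact m.null_union (h i (Finset.mem_insert_self i s))
      (ih fun j hj => h j (Finset.mem_insert_of_mem hj))

lemma null_finite (hat : ∀ x : X, m.m {x} = 0) {A : Set X} (hA : A.Finite) : m.m A = 0 := by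
  classical
  have hA' : A ⊆ ⋃ x ∈ hA.toFinset, ({x} : Set X) := by
    intro x hx; simp [Set.mem_iUnion]; exact hx
  have h0 : m.m (⋃ x ∈ hA.toFinset, ({x} : Set X)) = 0 :=
    m.null_biUnion _ _ (fun i _ => hat i)
  have := m.mono hA'
  have := m.nonneg A
  linarith

end Mean

open scoped Classical in
/-- dirac mean -/
noncomputable def diracMean {X : Type*} (x : X) : Mean X where
  m A := if x ∈ A then 1 else 0
  nonneg A := by split <;> norm_num
  total := by simp
  fin_add A B hd := by
    by_cases hA : x ∈ A <;> by_cases hB : x ∈ B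
    · exact (Set.disjoint_left.mp hd hA hB).elim
    all_goals simp [hA, hB, Set.mem_union]



namespace Mean
variable {X : Type*} (m : Mean X)

/-- grid cell: `{x | k/n ≤ f x < (k+1)/n}` -/
def cell (f : X → ℝ) (n k : ℕ) : Set X := {x | (k : ℝ)/n ≤ f x ∧ f x < ((k : ℝ)+1)/n}

lemma cell_disjoint (f : X → ℝ) (n : ℕ) :
    ∀ j ∈ Finset.range (n+1), ∀ k ∈ Finset.range (n+1), j ≠ k →
      Disjoint (cell f n j) (cell f n k) := by
  have key : ∀ j k : ℕ, j < k → Disjoint (cell f n j) (cell f n k) := by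
    intro j k hjk
    rw [Set.disjoint_left]
    rintro x ⟨_, hx2⟩ ⟨hx3, _⟩
    have : ((j:ℝ)+1)/n ≤ (k:ℝ)/n := by
      rcases Nat.eq_zero_or_pos n with h | h
      · simp [h]
      · have hnpos : (0:ℝ) < (n:ℝ) := by exact_mod_cast h
        gcongr
        exact_mod_cast hjk
    linarith
  intro j _ k _ hjk
  rcases lt_or_gt_of_ne hjk with h | h
  · exact key j k h
  · exact (key k j h).symm

lemma cell_cover (f : X → ℝ) (n : ℕ) (hn : 1 ≤ n) (hf0 : ∀ x, 0 ≤ f x) (hf1 : ∀ x, f x ≤ 1) :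
    Set.univ ⊆ ⋃ k ∈ Finset.range (n+1), cell f n k := by
  intro x _
  have hnpos : (0:ℝ) < (n:ℝ) := by exact_mod_cast hn
  set k := ⌊(n:ℝ) * f x⌋₊ with hk
  have hk0 : (0:ℝ) ≤ (n:ℝ) * f x := mul_nonneg hnpos.le (hf0 x)
  have h1 : (k:ℝ) ≤ (n:ℝ) * f x := Nat.floor_le hk0
  have h2 : (n:ℝ) * f x < (k:ℝ) + 1 := Nat.lt_floor_add_one _
  have hkn : k ≤ n := by
    have : (n:ℝ) * f x ≤ (n:ℝ) := by nlinarith [hf1 x]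
    have := h1.trans this
    exact_mod_cast this
  simp only [Set.mem_iUnion, Finset.mem_range]
  refine ⟨k, by omega, ?_, ?_⟩
  · rw [div_le_iff₀ hnpos]; linarith
  · rw [lt_div_iff₀ hnpos]; linarith

/-- total mass of cells is 1 -/
lemma cell_total (f : X → ℝ) (n : ℕ) (hn : 1 ≤ n) (hf0 : ∀ x, 0 ≤ f x) (hf1 : ∀ x, f x ≤ 1) :
    ∑ k ∈ Finset.range (n+1), m.m (cell f n k) = 1 := by
  have := m.partition (Finset.range (n+1)) (cell f n) Set.univ (cell_disjoint f n)
    (cell_cover f n hn hf0 hf1)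
  rw [m.total] at this
  rw [this]
  exact Finset.sum_congr rfl fun k _ => by rw [Set.univ_inter]

/-- grid lower sum -/
noncomputable def S (f : X → ℝ) (n : ℕ) : ℝ :=
  ∑ k ∈ Finset.range (n+1), ((k : ℝ)/n) * m.m (cell f n k)

lemma S_nonneg (f : X → ℝ) (n : ℕ) : 0 ≤ S m f n :=
  Finset.sum_nonneg fun k _ => mul_nonneg (by positivity) (m.nonneg _)

end Mean

namespace Mean
variable {X : Type*} (m : Mean X)

lemma meas_eq_sum_inter (A : Set X) (g : X → ℝ) (p : ℕ) (hp : 1 ≤ p)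
    (hg0 : ∀ x, 0 ≤ g x) (hg1 : ∀ x, g x ≤ 1) :
    m.m A = ∑ k ∈ Finset.range (p+1), m.m (A ∩ cell g p k) :=
  m.partition _ _ _ (cell_disjoint g p)
    ((Set.subset_univ A).trans (cell_cover g p hp hg0 hg1))

lemma coeff_bound {f g : X → ℝ} {n p j k : ℕ} (hn : 1 ≤ n) (hp : 1 ≤ p)
    {x : X} (hx : x ∈ cell f n j ∩ cell g p k) (hfg : ∀ y, f y ≤ g y) :
    (j:ℝ)/n - (k:ℝ)/p ≤ 1/p := by
  have hp' : (0:ℝ) < p := by exact_mod_cast hp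
  obtain ⟨⟨h1, _⟩, ⟨_, h4⟩⟩ := hx
  have := (h1.trans (hfg x)).trans_lt h4
  rw [div_lt_div_iff₀ (by positivity) hp'] at this
  rw [div_sub_div _ _ (by positivity : (n:ℝ) ≠ 0) (by positivity : (p:ℝ) ≠ 0),
    div_le_div_iff₀ (by positivity) hp']
  ring_nf
  ring_nf at this
  nlinarith [hp', (by positivity : (0:ℝ) < (n:ℝ))]

lemma S_eq_double (f g : X → ℝ) (n p : ℕ) (hp : 1 ≤ p)
    (hg0 : ∀ x, 0 ≤ g x) (hg1 : ∀ x, g x ≤ 1) :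
    S m f n = ∑ j ∈ Finset.range (n+1), ∑ k ∈ Finset.range (p+1),
      ((j:ℝ)/n) * m.m (cell f n j ∩ cell g p k) := by
  refine Finset.sum_congr rfl fun j _ => ?_
  rw [m.meas_eq_sum_inter (cell f n j) g p hp hg0 hg1, Finset.mul_sum]

lemma double_total (f g : X → ℝ) (n p : ℕ) (hn : 1 ≤ n) (hp : 1 ≤ p)
    (hf0 : ∀ x, 0 ≤ f x) (hf1 : ∀ x, f x ≤ 1)
    (hg0 : ∀ x, 0 ≤ g x) (hg1 : ∀ x, g x ≤ 1) :
    ∑ j ∈ Finset.range (n+1), ∑ k ∈ Finset.range (p+1),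
      m.m (cell f n j ∩ cell g p k) = 1 := by
  rw [Finset.sum_congr rfl fun j _ =>
    (m.meas_eq_sum_inter (cell f n j) g p hp hg0 hg1).symm]
  exact m.cell_total f n hn hf0 hf1

lemma S_diff_bound (f : X → ℝ) (hf0 : ∀ x, 0 ≤ f x) (hf1 : ∀ x, f x ≤ 1)
    (n p : ℕ) (hn : 1 ≤ n) (hp : 1 ≤ p) :
    |S m f n - S m f p| ≤ 1/n + 1/p := by
  have hn' : (0:ℝ) < n := by exact_mod_cast hn
  have hp' : (0:ℝ) < p := by exact_mod_cast hp
  have e1 := m.S_eq_double f f n p hp hf0 hf1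
  have e2 : S m f p = ∑ j ∈ Finset.range (n+1), ∑ k ∈ Finset.range (p+1),
      ((k:ℝ)/p) * m.m (cell f n j ∩ cell f p k) := by
    rw [m.S_eq_double f f p n hn hf0 hf1, Finset.sum_comm]
    exact Finset.sum_congr rfl fun j _ => Finset.sum_congr rfl fun k _ => by
      rw [Set.inter_comm]
  rw [e1, e2, ← Finset.sum_sub_distrib]
  have hterm : ∀ j ∈ Finset.range (n+1), ∀ k ∈ Finset.range (p+1),
      |((j:ℝ)/n) * m.m (cell f n j ∩ cell f p k) -
        ((k:ℝ)/p) * m.m (cell f n j ∩ cell f p k)| ≤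
      (1/n + 1/p) * m.m (cell f n j ∩ cell f p k) := by
    intro j _ k _
    rw [← sub_mul, abs_mul, abs_of_nonneg (m.nonneg _)]
    rcases Set.eq_empty_or_nonempty (cell f n j ∩ cell f p k) with he | ⟨x, hx⟩
    · rw [he, m.empty]; simp
    · apply mul_le_mul_of_nonneg_right _ (m.nonneg _)
      rw [abs_sub_le_iff]
      constructor
      · have := coeff_bound hn hp hx (fun y => le_refl (f y))
        have h1n : 0 ≤ 1/(n:ℝ) := by positivity
        linarith
      · have hx' : x ∈ cell f p k ∩ cell f n j := ⟨hx.2, hx.1⟩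
        have := coeff_bound hp hn hx' (fun y => le_refl (f y))
        have h1p : 0 ≤ 1/(p:ℝ) := by positivity
        linarith
  have hbig : |∑ j ∈ Finset.range (n+1),
      (∑ k ∈ Finset.range (p+1), ((j:ℝ)/n) * m.m (cell f n j ∩ cell f p k) -
       ∑ k ∈ Finset.range (p+1), ((k:ℝ)/p) * m.m (cell f n j ∩ cell f p k))| ≤
      ∑ j ∈ Finset.range (n+1), ∑ k ∈ Finset.range (p+1),
        (1/(n:ℝ) + 1/p) * m.m (cell f n j ∩ cell f p k) := by
    refine (Finset.abs_sum_le_sum_abs _ _).trans (Finset.sum_le_sum fun j hj => ?_)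
    rw [← Finset.sum_sub_distrib]
    exact (Finset.abs_sum_le_sum_abs _ _).trans (Finset.sum_le_sum fun k hk => hterm j hj k hk)
  refine hbig.trans ?_
  have hc : ∑ j ∈ Finset.range (n+1), ∑ k ∈ Finset.range (p+1),
      (1/(n:ℝ) + 1/p) * m.m (cell f n j ∩ cell f p k)
      = (1/(n:ℝ) + 1/p) * ∑ j ∈ Finset.range (n+1), ∑ k ∈ Finset.range (p+1),
        m.m (cell f n j ∩ cell f p k) := by
    rw [Finset.mul_sum]
    exact Finset.sum_congr rfl fun j _ => by rw [Finset.mul_sum]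
  rw [hc, m.double_total f f n p hn hp hf0 hf1 hf0 hf1, mul_one]

end Mean

namespace Mean
variable {X : Type*} (m : Mean X)

lemma S_add_bound (f g : X → ℝ) (hf0 : ∀ x, 0 ≤ f x) (hg0 : ∀ x, 0 ≤ g x)
    (hfg1 : ∀ x, f x + g x ≤ 1) (n : ℕ) (hn : 1 ≤ n) :
    S m f n + S m g n ≤ S m (fun x => f x + g x) n ∧
    S m (fun x => f x + g x) n ≤ S m f n + S m g n + 1/n := by
  have hn' : (0:ℝ) < n := by exact_mod_cast hn
  set h : X → ℝ := fun x => f x + g x with hh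
  have hf1 : ∀ x, f x ≤ 1 := fun x => le_trans (le_add_of_nonneg_right (hg0 x)) (hfg1 x)
  have hg1 : ∀ x, g x ≤ 1 := fun x => le_trans (le_add_of_nonneg_left (hf0 x)) (hfg1 x)
  have hh0 : ∀ x, 0 ≤ h x := fun x => add_nonneg (hf0 x) (hg0 x)
  have hh1 : ∀ x, h x ≤ 1 := hfg1
  set r := Finset.range (n+1) with hr
  have e1 : S m f n + S m g n = ∑ j ∈ r, ∑ k ∈ r,
      (((j:ℝ)+k)/n) * m.m (cell f n j ∩ cell g n k) := by
    have ef := m.S_eq_double f g n n hn hg0 hg1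
    have eg : S m g n = ∑ j ∈ r, ∑ k ∈ r, ((k:ℝ)/n) * m.m (cell f n j ∩ cell g n k) := by
      rw [m.S_eq_double g f n n hn hf0 hf1, Finset.sum_comm]
      exact Finset.sum_congr rfl fun j _ => Finset.sum_congr rfl fun k _ => by
        rw [Set.inter_comm]
    rw [ef, eg, ← Finset.sum_add_distrib]
    refine Finset.sum_congr rfl fun j _ => ?_
    rw [← Finset.sum_add_distrib]
    refine Finset.sum_congr rfl fun k _ => ?_
    rw [← add_mul, ← add_div]
  have e1' : S m f n + S m g n = ∑ j ∈ r, ∑ k ∈ r, ∑ l ∈ r,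
      (((j:ℝ)+k)/n) * m.m (cell h n l ∩ (cell f n j ∩ cell g n k)) := by
    rw [e1]
    refine Finset.sum_congr rfl fun j _ => Finset.sum_congr rfl fun k _ => ?_
    rw [m.meas_eq_sum_inter (cell f n j ∩ cell g n k) h n hn hh0 hh1, Finset.mul_sum]
    exact Finset.sum_congr rfl fun l _ => by rw [Set.inter_comm (cell f n j ∩ cell g n k)]
  have e3 : S m h n = ∑ j ∈ r, ∑ k ∈ r, ∑ l ∈ r,
      ((l:ℝ)/n) * m.m (cell h n l ∩ (cell f n j ∩ cell g n k)) := by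
    have e3' : S m h n = ∑ l ∈ r, ∑ j ∈ r, ∑ k ∈ r,
        ((l:ℝ)/n) * m.m (cell h n l ∩ (cell f n j ∩ cell g n k)) := by
      rw [m.S_eq_double h f n n hn hf0 hf1]
      refine Finset.sum_congr rfl fun l _ => Finset.sum_congr rfl fun j _ => ?_
      rw [m.meas_eq_sum_inter (cell h n l ∩ cell f n j) g n hn hg0 hg1, Finset.mul_sum]
      exact Finset.sum_congr rfl fun k _ => by rw [Set.inter_assoc]
    rw [e3', Finset.sum_comm]
    refine Finset.sum_congr rfl fun j _ => ?_
    rw [Finset.sum_comm]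
  have hterm : ∀ j ∈ r, ∀ k ∈ r, ∀ l ∈ r,
      (((j:ℝ)+k)/n) * m.m (cell h n l ∩ (cell f n j ∩ cell g n k)) ≤
        ((l:ℝ)/n) * m.m (cell h n l ∩ (cell f n j ∩ cell g n k)) ∧
      ((l:ℝ)/n) * m.m (cell h n l ∩ (cell f n j ∩ cell g n k)) ≤
        (((j:ℝ)+k)/n) * m.m (cell h n l ∩ (cell f n j ∩ cell g n k))
          + (1/n) * m.m (cell h n l ∩ (cell f n j ∩ cell g n k)) := by
    intro j _ k _ l _
    rcases Set.eq_empty_or_nonempty (cell h n l ∩ (cell f n j ∩ cell g n k)) with he | ⟨x, hx⟩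
    · rw [he, m.empty]; simp
    · obtain ⟨⟨hl1, hl2⟩, ⟨hj1, hj2⟩, hk1, hk2⟩ := hx
      have hhx : h x = f x + g x := rfl
      have hjk_le_l : (j:ℝ) + k ≤ l := by
        have h1 : ((j:ℝ)+k)/n ≤ h x := by
          rw [div_le_iff₀ hn']
          rw [div_le_iff₀ hn'] at hj1 hk1
          rw [hhx]; linarith
        have h2 : ((j:ℝ)+k)/n < ((l:ℝ)+1)/n := lt_of_le_of_lt h1 hl2
        rw [div_lt_div_iff₀ hn' hn'] at h2
        have h3 : (j:ℝ)+k < (l:ℝ)+1 := by nlinarith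
        have h4 : j + k < l + 1 := by exact_mod_cast h3
        exact_mod_cast Nat.lt_succ_iff.mp h4
      have hl_le : (l:ℝ) ≤ (j:ℝ) + k + 1 := by
        have h1 : h x < ((j:ℝ)+k+2)/n := by
          rw [lt_div_iff₀ hn']
          rw [lt_div_iff₀ hn'] at hj2 hk2
          rw [hhx]; linarith
        have h2 : ((l:ℝ))/n < ((j:ℝ)+k+2)/n := lt_of_le_of_lt hl1 h1
        rw [div_lt_div_iff₀ hn' hn'] at h2
        have h3 : (l:ℝ) < (j:ℝ)+k+2 := by nlinarith
        have h4 : l < j + k + 2 := by exact_mod_cast h3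
        have h5 : l ≤ j + k + 1 := Nat.lt_succ_iff.mp h4
        exact_mod_cast h5
      constructor
      · apply mul_le_mul_of_nonneg_right _ (m.nonneg _)
        gcongr
      · rw [← add_mul]
        apply mul_le_mul_of_nonneg_right _ (m.nonneg _)
        rw [← add_div]
        gcongr
  have e4 : ∑ j ∈ r, ∑ k ∈ r, ∑ l ∈ r,
      m.m (cell h n l ∩ (cell f n j ∩ cell g n k)) = 1 := by
    have hin : ∀ j ∈ r, ∀ k ∈ r, ∑ l ∈ r,
        m.m (cell h n l ∩ (cell f n j ∩ cell g n k)) = m.m (cell f n j ∩ cell g n k) := by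
      intro j _ k _
      have t1 := m.meas_eq_sum_inter (cell f n j ∩ cell g n k) h n hn hh0 hh1
      calc ∑ l ∈ r, m.m (cell h n l ∩ (cell f n j ∩ cell g n k))
          = ∑ l ∈ r, m.m ((cell f n j ∩ cell g n k) ∩ cell h n l) :=
            Finset.sum_congr rfl fun l _ => by rw [Set.inter_comm]
        _ = m.m (cell f n j ∩ cell g n k) := t1.symm
    rw [Finset.sum_congr rfl fun j hj => Finset.sum_congr rfl fun k hk => hin j hj k hk]
    exact m.double_total f g n n hn hn hf0 hf1 hg0 hg1
  constructor
  · rw [e1', e3]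
    exact Finset.sum_le_sum fun j hj => Finset.sum_le_sum fun k hk =>
      Finset.sum_le_sum fun l hl => (hterm j hj k hk l hl).1
  · rw [e3, e1']
    have step : ∑ j ∈ r, ∑ k ∈ r, ∑ l ∈ r,
        ((l:ℝ)/n) * m.m (cell h n l ∩ (cell f n j ∩ cell g n k)) ≤
        ∑ j ∈ r, ∑ k ∈ r, ∑ l ∈ r,
        ((((j:ℝ)+k)/n) * m.m (cell h n l ∩ (cell f n j ∩ cell g n k))
          + (1/n) * m.m (cell h n l ∩ (cell f n j ∩ cell g n k))) :=
      Finset.sum_le_sum fun j hj => Finset.sum_le_sum fun k hk =>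
        Finset.sum_le_sum fun l hl => (hterm j hj k hk l hl).2
    refine step.trans ?_
    have split : ∑ j ∈ r, ∑ k ∈ r, ∑ l ∈ r,
        ((((j:ℝ)+k)/n) * m.m (cell h n l ∩ (cell f n j ∩ cell g n k))
          + (1/n) * m.m (cell h n l ∩ (cell f n j ∩ cell g n k)))
        = (∑ j ∈ r, ∑ k ∈ r, ∑ l ∈ r,
            (((j:ℝ)+k)/n) * m.m (cell h n l ∩ (cell f n j ∩ cell g n k)))
          + (1/n) * ∑ j ∈ r, ∑ k ∈ r, ∑ l ∈ r,
            m.m (cell h n l ∩ (cell f n j ∩ cell g n k)) := by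
      rw [Finset.mul_sum, ← Finset.sum_add_distrib]
      refine Finset.sum_congr rfl fun j _ => ?_
      rw [Finset.mul_sum, ← Finset.sum_add_distrib]
      refine Finset.sum_congr rfl fun k _ => ?_
      rw [Finset.mul_sum, ← Finset.sum_add_distrib]
    rw [split, e4, mul_one]

end Mean

namespace Mean
variable {X : Type*} (m : Mean X)

open Filter Topology

open scoped Classical in
noncomputable def integral (f : X → ℝ) : ℝ :=
  if h : ∃ l : ℝ, Tendsto (S m f) atTop (nhds l) then h.choose else 0

lemma tendsto_S (f : X → ℝ) (hf0 : ∀ x, 0 ≤ f x) (hf1 : ∀ x, f x ≤ 1) :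
    Tendsto (S m f) atTop (nhds (integral m f)) := by
  have hcauchy : CauchySeq (S m f) := by
    rw [Metric.cauchySeq_iff]
    intro ε hε
    obtain ⟨N, hN⟩ := exists_nat_gt (2/ε)
    refine ⟨max N 1, fun a ha b hb => ?_⟩
    have ha1 : 1 ≤ a := le_trans (le_max_right N 1) ha
    have hb1 : 1 ≤ b := le_trans (le_max_right N 1) hb
    have haN : N ≤ a := le_trans (le_max_left N 1) ha
    have hbN : N ≤ b := le_trans (le_max_left N 1) hb
    rw [Real.dist_eq]
    have hbound := m.S_diff_bound f hf0 hf1 a b ha1 hb1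
    have hNpos : (0:ℝ) < N := lt_of_le_of_lt (by positivity) hN
    have h2 : 2/ε < N := hN
    have hN2 : 1/(N:ℝ) < ε/2 := by
      rw [div_lt_div_iff₀ hNpos (by norm_num : (0:ℝ) < 2)]
      rw [div_lt_iff₀ hε] at h2
      nlinarith
    have hba : (1:ℝ)/a ≤ 1/N := by
      apply one_div_le_one_div_of_le hNpos; exact_mod_cast haN
    have hbb : (1:ℝ)/b ≤ 1/N := by
      apply one_div_le_one_div_of_le hNpos; exact_mod_cast hbN
    calc |S m f a - S m f b| ≤ 1/a + 1/b := hbound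
      _ ≤ 1/N + 1/N := add_le_add hba hbb
      _ < ε/2 + ε/2 := by linarith
      _ = ε := by ring
  obtain ⟨l, hl⟩ := cauchySeq_tendsto_of_complete hcauchy
  have hex : ∃ l : ℝ, Tendsto (S m f) atTop (nhds l) := ⟨l, hl⟩
  rw [integral, dif_pos hex]
  exact hex.choose_spec

lemma integral_nonneg (f : X → ℝ) (hf0 : ∀ x, 0 ≤ f x) (hf1 : ∀ x, f x ≤ 1) :
    0 ≤ integral m f :=
  ge_of_tendsto' (m.tendsto_S f hf0 hf1) (fun n => m.S_nonneg f n)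

lemma integral_add (f g : X → ℝ) (hf0 : ∀ x, 0 ≤ f x) (hg0 : ∀ x, 0 ≤ g x)
    (hfg1 : ∀ x, f x + g x ≤ 1) :
    integral m (fun x => f x + g x) = integral m f + integral m g := by
  have hf1 : ∀ x, f x ≤ 1 := fun x => le_trans (le_add_of_nonneg_right (hg0 x)) (hfg1 x)
  have hg1 : ∀ x, g x ≤ 1 := fun x => le_trans (le_add_of_nonneg_left (hf0 x)) (hfg1 x)
  have hh0 : ∀ x, 0 ≤ f x + g x := fun x => add_nonneg (hf0 x) (hg0 x)
  have tf := m.tendsto_S f hf0 hf1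
  have tg := m.tendsto_S g hg0 hg1
  have th := m.tendsto_S (fun x => f x + g x) hh0 hfg1
  have hdiff : Tendsto (fun n => S m (fun x => f x + g x) n - (S m f n + S m g n))
      atTop (nhds 0) := by
    apply squeeze_zero'
    · filter_upwards [eventually_ge_atTop 1] with n hn
      have := (m.S_add_bound f g hf0 hg0 hfg1 n hn).1
      linarith
    · filter_upwards [eventually_ge_atTop 1] with n hn
      have := (m.S_add_bound f g hf0 hg0 hfg1 n hn).2
      linarith
    · exact tendsto_one_div_atTop_nhds_zero_nat
  have th2 : Tendsto (S m (fun x => f x + g x)) atTop (nhds (integral m f + integral m g)) := by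
    have := (tf.add tg).add hdiff
    simp only [add_zero] at this
    convert this using 2 with n
    ring
  exact tendsto_nhds_unique th th2

lemma integral_indicator (f : X → ℝ) (Y : Set X)
    (hfY : ∀ y ∈ Y, f y = 1) (hfY' : ∀ y ∉ Y, f y = 0) :
    integral m f = m.m Y := by
  have hf0 : ∀ x, 0 ≤ f x := by
    intro x; by_cases hx : x ∈ Y
    · rw [hfY x hx]; norm_num
    · rw [hfY' x hx]
  have hf1 : ∀ x, f x ≤ 1 := by
    intro x; by_cases hx : x ∈ Y
    · rw [hfY x hx]
    · rw [hfY' x hx]; norm_num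
  have hS : ∀ n : ℕ, 1 ≤ n → S m f n = m.m Y := by
    intro n hn
    have hn' : (0:ℝ) < n := by exact_mod_cast hn
    have hcells : ∀ k ∈ Finset.range (n+1), k ≠ n →
        ((k:ℝ)/n) * m.m (cell f n k) = 0 := by
      intro k hk hkn
      rcases Nat.eq_zero_or_pos k with rfl | hkpos
      · simp
      · have : cell f n k = ∅ := by
          ext x
          simp only [cell, Set.mem_setOf_eq, Set.mem_empty_iff_false, iff_false, not_and,
            not_lt]
          intro h1
          by_cases hx : x ∈ Y
          · rw [hfY x hx]
            rw [div_le_iff₀ hn']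
            have hkn' : k < n := lt_of_le_of_ne (Nat.lt_succ_iff.mp (Finset.mem_range.mp hk)) hkn
            have : (k:ℝ) + 1 ≤ n := by exact_mod_cast hkn'
            linarith
          · rw [hfY' x hx] at h1
            have : (0:ℝ) < (k:ℝ)/n := by positivity
            linarith
        rw [this, m.empty, mul_zero]
    have hcelln : cell f n n = Y := by
      ext x
      simp only [cell, Set.mem_setOf_eq]
      constructor
      · rintro ⟨h1, _⟩
        by_contra hx
        rw [hfY' x hx] at h1
        rw [div_le_iff₀ hn'] at h1
        simp at h1
        have : (0:ℝ) < n := hn'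
        nlinarith
      · intro hx
        rw [hfY x hx]
        constructor
        · rw [div_le_iff₀ hn']; nlinarith
        · rw [lt_div_iff₀ hn']; nlinarith
    rw [S, Finset.sum_eq_single n]
    · rw [hcelln, div_self (ne_of_gt hn'), one_mul]
    · intro k hk hkn; exact hcells k hk hkn
    · intro hnn; exact absurd (Finset.self_mem_range_succ n) hnn
  have ht : Tendsto (S m f) atTop (nhds (m.m Y)) := by
    apply Tendsto.congr' _ tendsto_const_nhds
    filter_upwards [eventually_ge_atTop 1] with n hn
    exact (hS n hn).symm
  exact tendsto_nhds_unique (m.tendsto_S f hf0 hf1) ht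

lemma integral_comp (e : Equiv.Perm X) (hinv : ∀ A : Set X, m.m (⇑e '' A) = m.m A)
    (f : X → ℝ) : integral m (fun x => f (e x)) = integral m f := by
  have hS : S m (fun x => f (e x)) = S m f := by
    funext n
    refine Finset.sum_congr rfl fun k _ => ?_
    have hcell : cell (fun x => f (e x)) n k = ⇑e ⁻¹' (cell f n k) := rfl
    rw [hcell]
    have h1 := hinv (⇑e ⁻¹' (cell f n k))
    rw [Set.image_preimage_eq (cell f n k) e.surjective] at h1
    rw [h1]
  rw [integral, integral, hS]

end Mean


lemma amenable_of_mulEquiv {G₁ G₂ : Type*} [Group G₁] [Group G₂] (e : G₁ ≃* G₂)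
    (h : AmenableGroup G₁) : AmenableGroup G₂ := by
  obtain ⟨m, hm⟩ := h
  refine ⟨⟨fun A => m.m (⇑e ⁻¹' A), fun A => m.nonneg _, by simpa using m.total,
    fun A B hd => by rw [Set.preimage_union]; exact m.fin_add _ _ (hd.preimage _)⟩, ?_⟩
  intro g A
  have hpre : ⇑e ⁻¹' ((fun x => g * x) '' A) =
      (fun x => e.symm g * x) '' (⇑e ⁻¹' A) := by
    ext x
    simp only [Set.mem_preimage, Set.mem_image]
    constructor
    · rintro ⟨a, ha, hax⟩
      refine ⟨e.symm a, by simpa using ha, ?_⟩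
      have : x = e.symm (g * a) := by
        rw [hax]; simp
      rw [this, map_mul]
    · rintro ⟨z, hz, hzx⟩
      refine ⟨e z, hz, ?_⟩
      rw [← hzx, map_mul]; simp
  show m.m (⇑e ⁻¹' ((fun x => g * x) '' A)) = m.m (⇑e ⁻¹' A)
  rw [hpre]
  exact hm (e.symm g) _

lemma amenable_subgroup {G' : Type*} [Group G'] (H' : Subgroup G')
    (h : AmenableGroup G') : AmenableGroup ↥H' := by
  classical
  obtain ⟨m, hm⟩ := h
  set Q := Quotient (QuotientGroup.rightRel H') with hQ
  have hmem : ∀ x : G', x * (Quotient.out (Quotient.mk (QuotientGroup.rightRel H') x) : G')⁻¹ ∈ H' := by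
    intro x
    have h1 : (QuotientGroup.rightRel H') (Quotient.out (Quotient.mk (QuotientGroup.rightRel H') x)) x :=
      Quotient.exact (Quotient.out_eq _)
    exact QuotientGroup.rightRel_apply.mp h1
  set D : G' → ↥H' := fun x => ⟨x * (Quotient.out (Quotient.mk (QuotientGroup.rightRel H') x) : G')⁻¹, hmem x⟩ with hD
  have hclass : ∀ (h : ↥H') (x : G'), Quotient.mk (QuotientGroup.rightRel H') ((h : G') * x)
      = Quotient.mk (QuotientGroup.rightRel H') x := by
    intro h x
    apply Quotient.sound
    show (QuotientGroup.rightRel H') ((h : G') * x) x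
    rw [QuotientGroup.rightRel_apply]
    simpa using h.2
  have hDmul : ∀ (h : ↥H') (x : G'), D ((h : G') * x) = h * D x := by
    intro h x
    apply Subtype.ext
    simp only [hD, Subgroup.coe_mul]
    rw [hclass h x, mul_assoc]
  refine ⟨⟨fun A => m.m (D ⁻¹' A), fun A => m.nonneg _, by simpa using m.total,
    fun A B hd => by rw [Set.preimage_union]; exact m.fin_add _ _ (hd.preimage _)⟩, ?_⟩
  intro h A
  have hpre : D ⁻¹' ((fun s => h * s) '' A) = (fun x => (h : G') * x) '' (D ⁻¹' A) := by
    ext x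
    simp only [Set.mem_preimage, Set.mem_image]
    constructor
    · rintro ⟨a, ha, hax⟩
      refine ⟨(h : G')⁻¹ * x, ?_, by simp⟩
      have hx : x = (h : G') * ((h : G')⁻¹ * x) := by simp
      have : D x = h * D ((h : G')⁻¹ * x) := by
        conv_lhs => rw [hx]
        exact hDmul h _
      have ha2 : a = D ((h : G')⁻¹ * x) := mul_left_cancel (hax.trans this)
      rwa [ha2] at ha
    · rintro ⟨z, hz, hzx⟩
      refine ⟨D z, hz, ?_⟩
      rw [← hzx]
      exact (hDmul h z).symm
  show m.m (D ⁻¹' ((fun s => h * s) '' A)) = m.m (D ⁻¹' A)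
  rw [hpre]
  exact hm (h : G') _

lemma amenable_of_le {G : Type*} [Group G] {K₁ K₂ : Subgroup G} (h : K₁ ≤ K₂)
    (h2 : AmenableGroup ↥K₂) : AmenableGroup ↥K₁ :=
  amenable_of_mulEquiv (Subgroup.subgroupOfEquivOfLe h)
    (amenable_subgroup (K₁.subgroupOf K₂) h2)


section AS
variable {Γ X : Type*} [Group Γ]

/-- stabilizer subgroup of a permutation action given by a hom -/
def permStab (φ : Γ →* Equiv.Perm X) (x : X) : Subgroup Γ :=
  Subgroup.comap φ (MulAction.stabilizer (Equiv.Perm X) x)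

lemma mem_permStab {φ : Γ →* Equiv.Perm X} {x : X} {γ : Γ} :
    γ ∈ permStab φ x ↔ φ γ x = x := by
  simp [permStab, MulAction.mem_stabilizer_iff, Subgroup.mem_comap, Equiv.Perm.smul_def]

theorem amenable_of_amenable_stabilizers (φ : Γ →* Equiv.Perm X) (m : Mean X)
    (hinv : ∀ (γ : Γ) (A : Set X), m.m (⇑(φ γ) '' A) = m.m A)
    (Y : Set X) (hY : ∀ (γ : Γ), ∀ y ∈ Y, φ γ y ∈ Y)
    (hpos : 0 < m.m Y)
    (hstab : ∀ y ∈ Y, AmenableGroup ↥(permStab φ y)) :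
    AmenableGroup Γ := by
  classical
  -- the orbit equivalence relation
  let r : Setoid X := ⟨fun x y => ∃ γ : Γ, φ γ x = y,
    ⟨fun x => ⟨1, by simp⟩,
     fun {x y} ⟨γ, h⟩ => ⟨γ⁻¹, by rw [← h, map_inv]; simp⟩,
     fun {x y z} ⟨γ, h⟩ ⟨δ, h'⟩ => ⟨δ * γ, by rw [map_mul]; simp [h, h']⟩⟩⟩
  let out : Quotient r → X := Quotient.out
  have hout : ∀ y : X, ∃ γ : Γ, φ γ (out (Quotient.mk r y)) = y := by
    intro y
    exact Quotient.exact (Quotient.out_eq (Quotient.mk r y))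
  let T : X → Γ := fun y => (hout y).choose
  have hT : ∀ y : X, φ (T y) (out (Quotient.mk r y)) = y := fun y => (hout y).choose_spec
  -- out of a class meeting Y is in Y
  have houtY : ∀ y ∈ Y, out (Quotient.mk r y) ∈ Y := by
    intro y hy
    have h1 : φ (T y)⁻¹ y = out (Quotient.mk r y) := by
      rw [map_inv]
      apply (φ (T y)).injective
      rw [Equiv.Perm.inv_def, Equiv.apply_symm_apply, hT y]
    rw [← h1]
    exact hY _ y hy
  -- choose invariant means on stabilizers where possible
  have hν' : ∀ q : Quotient r, ∃ μ : Mean ↥(permStab φ (out q)),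
      AmenableGroup ↥(permStab φ (out q)) →
        ∀ (s₀ : ↥(permStab φ (out q))) (B : Set ↥(permStab φ (out q))),
          μ.m ((fun s => s₀ * s) '' B) = μ.m B := by
    intro q
    by_cases h : AmenableGroup ↥(permStab φ (out q))
    · obtain ⟨μ, hμ⟩ := h
      exact ⟨μ, fun _ => hμ⟩
    · exact ⟨diracMean 1, fun ha => absurd ha h⟩
  let ν : ∀ q : Quotient r, Mean ↥(permStab φ (out q)) := fun q => (hν' q).choose
  have hν : ∀ q : Quotient r, AmenableGroup ↥(permStab φ (out q)) →
      ∀ (s₀ : ↥(permStab φ (out q))) (B : Set ↥(permStab φ (out q))),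
        (ν q).m ((fun s => s₀ * s) '' B) = (ν q).m B := fun q => (hν' q).choose_spec
  -- the mean along the fiber over y
  let μ : X → Set Γ → ℝ := fun y A =>
    (ν (Quotient.mk r y)).m (Subtype.val ⁻¹' {g : Γ | T y * g ∈ A})
  have hμ_nonneg : ∀ y A, 0 ≤ μ y A := fun y A => (ν _).nonneg _
  have hμ_le_one : ∀ y A, μ y A ≤ 1 := fun y A => (ν _).le_one _
  have hμ_univ : ∀ y, μ y Set.univ = 1 := by
    intro y
    have : (Subtype.val ⁻¹' {g : Γ | T y * g ∈ Set.univ} :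
        Set ↥(permStab φ (out (Quotient.mk r y)))) = Set.univ := by
      ext s; simp
    rw [show μ y Set.univ = (ν (Quotient.mk r y)).m _ from rfl, this, (ν _).total]
  have hμ_add : ∀ y (A B : Set Γ), Disjoint A B → μ y (A ∪ B) = μ y A + μ y B := by
    intro y A B hd
    have hsplit : (Subtype.val ⁻¹' {g : Γ | T y * g ∈ A ∪ B} :
        Set ↥(permStab φ (out (Quotient.mk r y)))) =
        Subtype.val ⁻¹' {g : Γ | T y * g ∈ A} ∪ Subtype.val ⁻¹' {g : Γ | T y * g ∈ B} := by
      ext s; simp [Set.mem_union]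
    have hd2 : Disjoint (Subtype.val ⁻¹' {g : Γ | T y * g ∈ A} :
        Set ↥(permStab φ (out (Quotient.mk r y))))
        (Subtype.val ⁻¹' {g : Γ | T y * g ∈ B}) := by
      rw [Set.disjoint_left]
      intro s hsA hsB
      exact Set.disjoint_left.mp hd hsA hsB
    show (ν _).m _ = (ν _).m _ + (ν _).m _
    rw [hsplit]
    exact (ν _).fin_add _ _ hd2
  -- the key equivariance property
  have hμ_equiv : ∀ (γ : Γ) (y : X), y ∈ Y → ∀ A : Set Γ,
      μ y ((fun x => γ * x) '' A) = μ (φ γ⁻¹ y) A := by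
    intro γ y hy A
    set y' := φ γ⁻¹ y with hy'def
    have hq : Quotient.mk r y' = Quotient.mk r y := by
      apply Quotient.sound
      exact ⟨γ, by rw [hy'def, map_inv]; exact Equiv.apply_symm_apply _ _⟩
    have hTy' : φ (T y') (out (Quotient.mk r y)) = y' := by
      rw [← hq]; exact hT y'
    have hs₀mem : (T y)⁻¹ * γ * T y' ∈ permStab φ (out (Quotient.mk r y)) := by
      rw [mem_permStab]
      rw [map_mul, map_mul, map_inv]
      simp only [Equiv.Perm.mul_apply]
      rw [hTy']
      have : φ γ y' = y := by
        rw [hy'def, map_inv]; exact Equiv.apply_symm_apply _ _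
      rw [this]
      apply (φ (T y)).injective
      rw [Equiv.Perm.inv_def, Equiv.apply_symm_apply, hT y]
    set s₀ : ↥(permStab φ (out (Quotient.mk r y))) := ⟨(T y)⁻¹ * γ * T y', hs₀mem⟩ with hs₀
    have hsets : (Subtype.val ⁻¹' {g : Γ | T y * g ∈ (fun x => γ * x) '' A} :
        Set ↥(permStab φ (out (Quotient.mk r y)))) =
        (fun s => s₀ * s) '' (Subtype.val ⁻¹' {g : Γ | T y' * g ∈ A}) := by
      ext s
      simp only [Set.mem_preimage, Set.mem_setOf_eq, Set.mem_image]
      constructor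
      · rintro ⟨a, ha, hax⟩
        refine ⟨s₀⁻¹ * s, ?_, mul_inv_cancel_left s₀ s⟩
        have hcoe : ((s₀⁻¹ * s : ↥(permStab φ (out (Quotient.mk r y)))) : Γ)
            = (T y')⁻¹ * γ⁻¹ * (T y) * (s : Γ) := by
          simp [hs₀, mul_assoc]
        show T y' * ((s₀⁻¹ * s : ↥(permStab φ (out (Quotient.mk r y)))) : Γ) ∈ A
        rw [hcoe]
        have heq : T y' * ((T y')⁻¹ * γ⁻¹ * T y * (s : Γ)) = γ⁻¹ * (T y * s) := by
          group
        rw [heq, ← hax]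
        have : γ⁻¹ * (γ * a) = a := by group
        rwa [this]
      · rintro ⟨s₁, hs₁, rfl⟩
        refine ⟨T y' * (s₁ : Γ), hs₁, ?_⟩
        push_cast [hs₀]
        group
    have hq' : μ y' A = (ν (Quotient.mk r y)).m
        (Subtype.val ⁻¹' {g : Γ | T y' * g ∈ A}) := by
      show (ν (Quotient.mk r y')).m (Subtype.val ⁻¹' {g : Γ | T y' * g ∈ A}) = _
      rw [hq]
    rw [hq']
    show (ν (Quotient.mk r y)).m _ = _
    rw [hsets]
    exact hν (Quotient.mk r y) (hstab _ (houtY y hy)) s₀ _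
  -- assemble the mean on Γ
  let f : Set Γ → X → ℝ := fun A y => if y ∈ Y then μ y A else 0
  have hf0 : ∀ A y, 0 ≤ f A y := by
    intro A y; by_cases hy : y ∈ Y <;> simp [f, hy, hμ_nonneg]
  have hf1 : ∀ A y, f A y ≤ 1 := by
    intro A y; by_cases hy : y ∈ Y <;> simp [f, hy, hμ_le_one]
  refine ⟨⟨fun A => m.integral (f A) / m.m Y,
    fun A => div_nonneg (m.integral_nonneg _ (hf0 A) (hf1 A)) hpos.le, ?_, ?_⟩, ?_⟩
  · -- total
    show m.integral (f Set.univ) / m.m Y = 1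
    have : m.integral (f Set.univ) = m.m Y := by
      apply m.integral_indicator _ Y
      · intro y hy; simp [f, hy, hμ_univ]
      · intro y hy; simp [f, hy]
    rw [this, div_self (ne_of_gt hpos)]
  · -- finite additivity
    intro A B hd
    have hfeq : f (A ∪ B) = fun y => f A y + f B y := by
      funext y
      by_cases hy : y ∈ Y
      · simp only [f, if_pos hy]
        exact hμ_add y A B hd
      · simp [f, hy]
    have hsum1 : ∀ y, f A y + f B y ≤ 1 := by
      intro y; rw [← congrFun hfeq y]; exact hf1 _ y
    show m.integral (f (A ∪ B)) / m.m Y = m.integral (f A) / m.m Y + m.integral (f B) / m.m Y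
    rw [hfeq, m.integral_add (f A) (f B) (hf0 A) (hf0 B) hsum1, add_div]
  · -- invariance
    intro γ A
    have hfeq : f ((fun x => γ * x) '' A) = fun y => f A (φ γ⁻¹ y) := by
      funext y
      by_cases hy : y ∈ Y
      · have hy' : φ γ⁻¹ y ∈ Y := hY γ⁻¹ y hy
        simp only [f, if_pos hy, if_pos hy']
        exact hμ_equiv γ y hy A
      · have hy' : φ γ⁻¹ y ∉ Y := by
          intro hc
          have h2 := hY γ _ hc
          rw [map_inv, Equiv.Perm.inv_def, Equiv.apply_symm_apply] at h2
          exact hy h2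
        have hy'' : (φ γ)⁻¹ y ∉ Y := by rw [← map_inv]; exact hy'
        have hy''' : (φ γ).symm y ∉ Y := hy''
        simp [f, hy, hy', hy'', hy''']
    show m.integral (f ((fun x => γ * x) '' A)) / m.m Y = m.integral (f A) / m.m Y
    rw [hfeq, m.integral_comp (φ γ⁻¹) (hinv γ⁻¹) (f A)]

end AS

section Key
variable {G : Type*} [Group G]

/-- conjugation moves `L ⊓ C(y)` to `L ⊓ C(lyl⁻¹)` for `l ∈ L` -/
lemma conj_map_inf_centralizer (L : Subgroup G) (l : G) (hl : l ∈ L) (y : G) :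
    Subgroup.map (MulAut.conj l).toMonoidHom (L ⊓ Subgroup.centralizer {y})
      = L ⊓ Subgroup.centralizer {l * y * l⁻¹} := by
  ext z
  simp only [Subgroup.mem_map, Subgroup.mem_inf, MulEquiv.coe_toMonoidHom, MulAut.conj_apply,
    Subgroup.mem_centralizer_iff, Set.mem_singleton_iff, forall_eq]
  constructor
  · rintro ⟨w, ⟨⟨hwL, hwc⟩, rfl⟩⟩
    refine ⟨L.mul_mem (L.mul_mem hl hwL) (L.inv_mem hl), ?_⟩
    calc (l * y * l⁻¹) * (l * w * l⁻¹) = l * (y * w) * l⁻¹ := by group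
      _ = l * (w * y) * l⁻¹ := by rw [hwc]
      _ = (l * w * l⁻¹) * (l * y * l⁻¹) := by group
  · rintro ⟨hzL, hzc⟩
    refine ⟨l⁻¹ * z * l, ⟨⟨L.mul_mem (L.mul_mem (L.inv_mem hl) hzL) hl, ?_⟩, by group⟩⟩
    have h2 : y * (l⁻¹ * z * l) * y⁻¹ * (l⁻¹ * z⁻¹ * l) = 1 := by
      have h3 : (l * y * l⁻¹) * z = z * (l * y * l⁻¹) := hzc
      have h4 : y * (l⁻¹ * z * l) = (l⁻¹ * z * l) * y := by
        have := congrArg (fun t => l⁻¹ * t * l) h3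
        simpa [mul_assoc] using this
      rw [h4]; group
    have h5 : y * (l⁻¹ * z * l) = (l⁻¹ * z * l) * y := by
      have h3 : (l * y * l⁻¹) * z = z * (l * y * l⁻¹) := hzc
      have := congrArg (fun t => l⁻¹ * t * l) h3
      simpa [mul_assoc] using this
    exact h5

/-- the set of `g` whose centralizer meets `L` amenably is null -/
lemma key_null (H : Subgroup G) (m : Mean G)
    (hinv : ∀ h ∈ H, ∀ A : Set G, m.m ((fun x => h * x * h⁻¹) '' A) = m.m A)
    (L : Subgroup G) (hLH : L ≤ H) (hL : ¬ AmenableGroup ↥L) :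
    m.m {g : G | AmenableGroup ↥(L ⊓ Subgroup.centralizer {g})} = 0 := by
  by_contra hc
  set Y := {g : G | AmenableGroup ↥(L ⊓ Subgroup.centralizer {g})} with hYdef
  have hpos : 0 < m.m Y := lt_of_le_of_ne (m.nonneg _) (Ne.symm hc)
  set φ : ↥L →* Equiv.Perm G := (MulAut.toPerm G).comp (MulAut.conj.comp L.subtype) with hφ
  have hφ_apply : ∀ (l : ↥L) (x : G), φ l x = (l : G) * x * (l : G)⁻¹ := by
    intro l x
    simp only [hφ, MonoidHom.comp_apply]
    rw [MulAut.toPerm]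
    exact MulAut.conj_apply (l : G) x
  apply hL
  apply amenable_of_amenable_stabilizers φ m ?_ Y ?_ hpos ?_
  · -- invariance of m
    intro l A
    have : ⇑(φ l) = fun x => (l : G) * x * (l : G)⁻¹ := funext fun x => hφ_apply l x
    rw [this]
    exact hinv (l : G) (hLH l.2) A
  · -- Y is invariant
    intro l y hy
    rw [hφ_apply]
    show AmenableGroup ↥(L ⊓ Subgroup.centralizer {(l:G) * y * (l:G)⁻¹})
    rw [← conj_map_inf_centralizer L (l : G) l.2 y]
    exact amenable_of_mulEquiv
      (MulEquiv.subgroupMap (MulAut.conj (l : G)) (L ⊓ Subgroup.centralizer {y})) hy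
  · -- stabilizers are amenable
    intro y hy
    have hstabeq : permStab φ y = (L ⊓ Subgroup.centralizer {y}).subgroupOf L := by
      ext l
      rw [mem_permStab, hφ_apply, Subgroup.mem_subgroupOf, Subgroup.mem_inf]
      simp only [Subgroup.mem_centralizer_iff, Set.mem_singleton_iff, forall_eq]
      constructor
      · intro h
        refine ⟨l.2, ?_⟩
        have : (l : G) * y * (l : G)⁻¹ * (l : G) = y * (l:G) := by rw [h]
        calc y * (l : G) = (l : G) * y * (l:G)⁻¹ * (l:G) := this.symm
          _ = (l : G) * y := by group
      · rintro ⟨-, h⟩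
        calc (l : G) * y * (l : G)⁻¹ = y * (l:G) * (l:G)⁻¹ := by rw [← h]
          _ = y := by group
    rw [hstabeq]
    exact amenable_of_mulEquiv (Subgroup.subgroupOfEquivOfLe inf_le_left).symm hy

/-- extraction of a fresh centralizing element -/
lemma exists_good (H : Subgroup G) (m : Mean G) (hat : ∀ g : G, m.m {g} = 0)
    (hinv : ∀ h ∈ H, ∀ A : Set G, m.m ((fun x => h * x * h⁻¹) '' A) = m.m A)
    (F' : Finset (Subgroup G)) (hF' : ∀ L ∈ F', L ≤ H ∧ ¬ AmenableGroup ↥L)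
    (Mset : Set G) (hM : Mset.Finite) :
    ∃ g : G, g ∉ Mset ∧ ∀ L ∈ F', ¬ AmenableGroup ↥(L ⊓ Subgroup.centralizer {g}) := by
  classical
  set bad := Mset ∪ ⋃ L ∈ F', {g : G | AmenableGroup ↥(L ⊓ Subgroup.centralizer {g})} with hbad
  have hnull : m.m bad = 0 := by
    apply m.null_union (m.null_finite hat hM)
    exact m.null_biUnion F' _ fun L hL => key_null H m hinv L (hF' L hL).1 (hF' L hL).2
  have hne : bad ≠ Set.univ := by
    intro h
    rw [h, m.total] at hnull
    norm_num at hnull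
  obtain ⟨g, hg⟩ := (Set.ne_univ_iff_exists_notMem bad).mp hne
  rw [hbad] at hg
  simp only [Set.mem_union, Set.mem_iUnion, not_or, not_exists] at hg
  obtain ⟨hg1, hg2⟩ := hg
  exact ⟨g, hg1, fun L hL ha => hg2 L hL ha⟩

end Key

section Main
variable {G : Type*} [Group G]

lemma centralizer_closure_eq (S : Set G) :
    Subgroup.centralizer ↑(Subgroup.closure S) = Subgroup.centralizer S := by
  ext z
  simp only [Subgroup.mem_centralizer_iff]
  constructor
  · intro h g hg; exact h g (Subgroup.subset_closure hg)
  · intro h g hg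
    have hle : Subgroup.closure S ≤ Subgroup.centralizer {z} := by
      rw [Subgroup.closure_le]
      intro s hs
      rw [SetLike.mem_coe, Subgroup.mem_centralizer_iff]
      intro w hw
      rw [Set.mem_singleton_iff] at hw; subst hw
      exact (h s hs).symm
    have hz := hle hg
    rw [Subgroup.mem_centralizer_iff] at hz
    exact (hz z rfl).symm

lemma centralizer_union_eq (A B : Set G) :
    Subgroup.centralizer (A ∪ B) = Subgroup.centralizer A ⊓ Subgroup.centralizer B := by
  ext z
  simp only [Subgroup.mem_inf, Subgroup.mem_centralizer_iff]
  constructor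
  · intro h
    exact ⟨fun g hg => h g (Or.inl hg), fun g hg => h g (Or.inr hg)⟩
  · rintro ⟨h1, h2⟩ g (hg | hg)
    · exact h1 g hg
    · exact h2 g hg

lemma centralizer_bot : Subgroup.centralizer ((⊥ : Subgroup G) : Set G) = ⊤ := by
  rw [Subgroup.coe_bot]
  ext z
  simp [Subgroup.mem_centralizer_iff]


end Main

end Aux

/-- Theorem (trichotomy for inner amenable pairs). -/
theorem pair_subgroup_trichotomy {G : Type*} [Group G] [Countable G] (H : Subgroup G)
    (hpair : PairInnerAmenable H) (hH : ¬ AmenableGroup ↥H) :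
    (∀ F : Finset (Subgroup G), (∀ L ∈ F, L ≤ H ∧ ¬ AmenableGroup ↥L) →
      ∃ K : Subgroup G, ((K : Set G)).Infinite ∧ AmenableGroup ↥K ∧
        ∀ L ∈ F, ¬ AmenableGroup ↥(L ⊓ Subgroup.centralizer (K : Set G))) ∨
    (∀ F : Finset (Subgroup G), (∀ L ∈ F, L ≤ H ∧ ¬ AmenableGroup ↥L) →
      ∃ M : ℕ → Subgroup G, Monotone M ∧ (∀ n, ((M n : Subgroup G) : Set G).Finite) ∧
        Filter.Tendsto (fun n => ((M n : Subgroup G) : Set G).ncard) Filter.atTop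
          Filter.atTop ∧
        ∀ L ∈ F, ∀ n : ℕ,
          ¬ AmenableGroup ↥(L ⊓ Subgroup.centralizer ((M n : Subgroup G) : Set G))) ∨
    (∀ F : Finset (Subgroup G), (∀ L ∈ F, L ≤ H ∧ ¬ AmenableGroup ↥L) →
      ∃ K : Subgroup G, ¬ AmenableGroup ↥K ∧
        ∀ L ∈ F, ¬ AmenableGroup ↥(L ⊓ Subgroup.centralizer (K : Set G))) := by
  classical
  obtain ⟨m, hat, hinv⟩ := hpair
  by_cases h1 : (∀ F : Finset (Subgroup G), (∀ L ∈ F, L ≤ H ∧ ¬ AmenableGroup ↥L) →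
      ∃ K : Subgroup G, ((K : Set G)).Infinite ∧ AmenableGroup ↥K ∧
        ∀ L ∈ F, ¬ AmenableGroup ↥(L ⊓ Subgroup.centralizer (K : Set G)))
  · exact Or.inl h1
  by_cases h2 : (∀ F : Finset (Subgroup G), (∀ L ∈ F, L ≤ H ∧ ¬ AmenableGroup ↥L) →
      ∃ M : ℕ → Subgroup G, Monotone M ∧ (∀ n, ((M n : Subgroup G) : Set G).Finite) ∧
        Filter.Tendsto (fun n => ((M n : Subgroup G) : Set G).ncard) Filter.atTop
          Filter.atTop ∧
        ∀ L ∈ F, ∀ n : ℕ,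
          ¬ AmenableGroup ↥(L ⊓ Subgroup.centralizer ((M n : Subgroup G) : Set G)))
  · exact Or.inr (Or.inl h2)
  refine Or.inr (Or.inr ?_)
  intro F hF
  obtain ⟨F₁, hF₁⟩ := not_forall.mp h1
  obtain ⟨hF₁hyp, hno1⟩ := Classical.not_imp.mp hF₁
  obtain ⟨F₂, hF₂⟩ := not_forall.mp h2
  obtain ⟨hF₂hyp, hno2⟩ := Classical.not_imp.mp hF₂
  by_contra hno3
  set Fstar : Finset (Subgroup G) := (F ∪ F₁) ∪ F₂ with hFstar_def
  have hFstar : ∀ L ∈ Fstar, L ≤ H ∧ ¬ AmenableGroup ↥L := by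
    intro L hL
    rw [hFstar_def, Finset.mem_union, Finset.mem_union] at hL
    rcases hL with (hL | hL) | hL
    · exact hF L hL
    · exact hF₁hyp L hL
    · exact hF₂hyp L hL
  have hmemF : ∀ L ∈ F, L ∈ Fstar := fun L hL => by
    rw [hFstar_def, Finset.mem_union, Finset.mem_union]; exact Or.inl (Or.inl hL)
  have hmemF₁ : ∀ L ∈ F₁, L ∈ Fstar := fun L hL => by
    rw [hFstar_def, Finset.mem_union, Finset.mem_union]; exact Or.inl (Or.inr hL)
  have hmemF₂ : ∀ L ∈ F₂, L ∈ Fstar := fun L hL => by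
    rw [hFstar_def, Finset.mem_union]; exact Or.inr hL
  set P : Subgroup G → Prop := fun M => ((M : Set G)).Finite ∧
    ∀ L ∈ Fstar, ¬ AmenableGroup ↥(L ⊓ Subgroup.centralizer (M : Set G)) with hP_def
  have hbot : P ⊥ := by
    constructor
    · rw [Subgroup.coe_bot]; exact Set.finite_singleton 1
    · intro L hL
      rw [centralizer_bot, inf_top_eq]
      exact (hFstar L hL).2
  have step : ∀ M : Subgroup G, P M → ∃ M' : Subgroup G,
      P M' ∧ M ≤ M' ∧ ((M : Set G) ⊂ (M' : Set G)) := by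
    intro M hM
    set F'' := Fstar.image (fun L => L ⊓ Subgroup.centralizer (M : Set G)) with hF''_def
    have hF'' : ∀ L' ∈ F'', L' ≤ H ∧ ¬ AmenableGroup ↥L' := by
      intro L' hL'
      rw [hF''_def, Finset.mem_image] at hL'
      obtain ⟨L, hL, rfl⟩ := hL'
      exact ⟨le_trans inf_le_left (hFstar L hL).1, hM.2 L hL⟩
    obtain ⟨g, hgM, hgood⟩ := exists_good H m hat hinv F'' hF'' (M : Set G) hM.1
    set M' := Subgroup.closure ((M : Set G) ∪ {g}) with hM'_def
    have hMM' : M ≤ M' := by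
      intro x hx
      exact Subgroup.subset_closure (Set.mem_union_left _ hx)
    have hgM' : g ∈ M' := Subgroup.subset_closure (Set.mem_union_right _ rfl)
    have hcent : Subgroup.centralizer (M' : Set G) =
        Subgroup.centralizer (M : Set G) ⊓ Subgroup.centralizer {g} := by
      rw [hM'_def, centralizer_closure_eq, centralizer_union_eq]
    have hcentL : ∀ L ∈ Fstar, ¬ AmenableGroup ↥(L ⊓ Subgroup.centralizer (M' : Set G)) := by
      intro L hL
      rw [hcent, ← inf_assoc]
      exact hgood (L ⊓ Subgroup.centralizer (M : Set G))
        (Finset.mem_image_of_mem _ hL)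
    have hamenM' : AmenableGroup ↥M' := by
      by_contra hna
      exact hno3 ⟨M', hna, fun L hL => hcentL L (hmemF L hL)⟩
    have hfin : ((M' : Set G)).Finite := by
      by_contra hinf
      exact hno1 ⟨M', hinf, hamenM', fun L hL => hcentL L (hmemF₁ L hL)⟩
    refine ⟨M', ⟨hfin, hcentL⟩, hMM', ?_⟩
    rw [Set.ssubset_def]
    exact ⟨fun x hx => hMM' hx, fun hsub => hgM (hsub hgM')⟩
  choose stepf hstep using step
  let seq : ℕ → {M : Subgroup G // P M} := fun n =>
    Nat.rec ⟨⊥, hbot⟩ (fun _ p => ⟨stepf p.1 p.2, (hstep p.1 p.2).1⟩) n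
  have hmono_succ : ∀ n, (seq n).1 ≤ (seq (n+1)).1 := fun n => (hstep _ _).2.1
  have hssub : ∀ n, (((seq n).1 : Set G)) ⊂ (((seq (n+1)).1 : Set G)) :=
    fun n => (hstep _ _).2.2
  apply hno2
  refine ⟨fun n => (seq n).1, monotone_nat_of_le_succ hmono_succ,
    fun n => (seq n).2.1, ?_, ?_⟩
  · have hsm : StrictMono (fun n => (((seq n).1 : Set G)).ncard) :=
      strictMono_nat_of_lt_succ fun n => Set.ncard_lt_ncard (hssub n) (seq (n+1)).2.1
    exact Filter.tendsto_atTop_mono (fun n => hsm.le_apply) Filter.tendsto_id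
  · intro L hL n
    exact (seq n).2.2 L (hmemF₂ L hL)
end
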